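/- arXiv:1501.06353 — 4 statements merged into one kernel-verified Lean document; each statement's English description precedes it below -/
import Mathlib

section
/- (Theorem 3.3 of the paper, combinatorial form.) Let D = (V, A) be a finite directed graph with A ≠ ∅, and let m be the maximum of |W| over all W ⊆ V such that either W is a connected pair, or |W| ≥ 3 and W can be generated from a connected pair. If D contains at least one directed sub-block, then m equals the maximum cardinality of a set U ⊆ V such that D[U] is a transmission block; if D contains no directed sub-block, then m = 2. -/
open Set

variable {V : Type*}

/-- One arc step within the induced subgraph on the vertex set `S`. -/
def StepIn (A : V → V → Prop) (S : Set V) (u v : V) : Prop :=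
  u ∈ S ∧ v ∈ S ∧ A u v

/-- `v` is reachable from `u` by a directed path in the induced subgraph on `S`
(every vertex is reachable from itself, provided it lies in `S`). -/
def ReachIn (A : V → V → Prop) (S : Set V) (u v : V) : Prop :=
  u ∈ S ∧ Relation.ReflTransGen (StepIn A S) u v

/-- `IN(X)`: the set of vertices from which some member of `X` is reachable,
computed in the induced subgraph on `S`. -/
def InSet (A : V → V → Prop) (S : Set V) (X : Set V) : Set V :=
  {u | ∃ x ∈ X, ReachIn A S u x}

/-- `Z` is dynamically partitioning with respect to `X` and `Y`:
`IN(X) ∩ IN(Y) = ∅` computed in the induced subgraph `D − Z`. -/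
def DynPart (A : V → V → Prop) (X Y Z : Set V) : Prop :=
  InSet A Zᶜ X ∩ InSet A Zᶜ Y = ∅

/-- `StepsLe r n u v`: `v` can be reached from `u` in at most `n` `r`-steps. -/
def StepsLe (r : V → V → Prop) : ℕ → V → V → Prop
  | 0, u, v => u = v
  | n + 1, u, v => u = v ∨ ∃ w, r u w ∧ StepsLe r n w v

/-- `v` is reachable from `u` by a directed path using at most `n` arcs
in the induced subgraph on `S`. -/
def ReachInLe (A : V → V → Prop) (S : Set V) (n : ℕ) (u v : V) : Prop :=
  u ∈ S ∧ StepsLe (StepIn A S) n u v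

/-- `IN_a(X)` computed in the induced subgraph on `S`. -/
def InSetLe (A : V → V → Prop) (S : Set V) (a : ℕ) (X : Set V) : Set V :=
  {u | ∃ x ∈ X, ReachInLe A S a u x}

/-- The vertex `i` is cycle-partitioning at order `x` with respect to `X` and `Y`:
`IN_a(X) ∩ IN_b(Y) = ∅` in `D − {i}` for all `a + b = x`. -/
def CyclePart (A : V → V → Prop) (X Y : Set V) (i : V) (x : ℕ) : Prop :=
  ∀ a b : ℕ, a + b = x → InSetLe A {i}ᶜ a X ∩ InSetLe A {i}ᶜ b Y = ∅

/-- One adjacency step of the underlying (simple) graph of `D[W]`. -/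
def UStep (A : V → V → Prop) (W : Set V) (u v : V) : Prop :=
  u ∈ W ∧ v ∈ W ∧ u ≠ v ∧ (A u v ∨ A v u)

/-- The underlying graph of `D[W]` is connected. -/
def UConnected (A : V → V → Prop) (W : Set V) : Prop :=
  W.Nonempty ∧ ∀ u ∈ W, ∀ v ∈ W, Relation.ReflTransGen (UStep A W) u v

/-- The underlying graph of `D[W]` is biconnected: at least 3 vertices, connected,
and deleting any single vertex leaves a connected graph. -/
def Biconnected (A : V → V → Prop) (W : Set V) : Prop :=
  3 ≤ W.ncard ∧ UConnected A W ∧ ∀ v ∈ W, UConnected A (W \ {v})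

/-- `D[W]` is a directed sub-block: some vertex of `W` is reachable in `D[W]` from
every other vertex of `W`, and the underlying graph of `D[W]` is biconnected. -/
def DirectedSubBlock (A : V → V → Prop) (W : Set V) : Prop :=
  (∃ i ∈ W, ∀ j ∈ W, ReachIn A W j i) ∧ Biconnected A W

/-- A directed sub-block is a transmission block iff it is maximal. -/
def TransmissionBlock (A : V → V → Prop) (W : Set V) : Prop :=
  DirectedSubBlock A W ∧ ∀ U : Set V, W ⊂ U → ¬ DirectedSubBlock A U

/-- A connected pair: a two-element set `{i, j}` with an arc between `i` and `j`. -/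
def ConnectedPair (A : V → V → Prop) (W : Set V) : Prop :=
  ∃ i j : V, i ≠ j ∧ W = {i, j} ∧ (A i j ∨ A j i)

/-- `W'` is obtained from `W` by one exact generation step. -/
def ExactStep (A : V → V → Prop) (W W' : Set V) : Prop :=
  ∃ k, k ∉ W ∧ W' = W ∪ {k} ∧ ∃ j ∈ W, A k j ∧ ¬ DynPart A {k} (W \ {j}) {j}

/-- `W` is the last term of a finite chain of exact generation steps whose
first term is a connected pair. -/
def GeneratedFromPair (A : V → V → Prop) (W : Set V) : Prop :=
  ∃ P : Set V, ConnectedPair A P ∧ Relation.ReflTransGen (ExactStep A) P W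

/-- `W'` is obtained from `W` by one order-`x` cycle generation step. -/
def CycleStep (A : V → V → Prop) (x : ℕ) (W W' : Set V) : Prop :=
  ∃ k, k ∉ W ∧ W' = W ∪ {k} ∧ ∃ j ∈ W, A k j ∧ ¬ CyclePart A {k} (W \ {j}) j x

/-- `W` is the last term of a finite chain of order-`x` cycle generation steps
whose first term is a connected pair. -/
def XGenerable (A : V → V → Prop) (x : ℕ) (W : Set V) : Prop :=
  ∃ P : Set V, ConnectedPair A P ∧ Relation.ReflTransGen (CycleStep A x) P W

section Aux

variable {A : V → V → Prop}

lemma reachIn_mem_right {S : Set V} {u v : V} (h : ReachIn A S u v) : v ∈ S := by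
  obtain ⟨hu, h⟩ := h
  induction h with
  | refl => exact hu
  | tail _ hstep _ => exact hstep.2.1

lemma reachIn_refl {S : Set V} {u : V} (h : u ∈ S) : ReachIn A S u u := ⟨h, .refl⟩

lemma reachIn_trans {S : Set V} {u v w : V} (h1 : ReachIn A S u v) (h2 : ReachIn A S v w) :
    ReachIn A S u w := ⟨h1.1, h1.2.trans h2.2⟩

lemma stepIn_mono {S T : Set V} (hST : S ⊆ T) {u v : V} (h : StepIn A S u v) : StepIn A T u v :=
  ⟨hST h.1, hST h.2.1, h.2.2⟩

lemma reachIn_mono {S T : Set V} (hST : S ⊆ T) {u v : V} (h : ReachIn A S u v) :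
    ReachIn A T u v :=
  ⟨hST h.1, Relation.ReflTransGen.mono (fun _ _ hs => stepIn_mono hST hs) _ _ h.2⟩

lemma reachIn_head {S : Set V} {u v w : V} (h : StepIn A S u v) (h2 : ReachIn A S v w) :
    ReachIn A S u w := ⟨h.1, Relation.ReflTransGen.head h h2.2⟩

/-- Generic crossing lemma: a reflexive-transitive chain from outside `T` to inside `T`
must contain a step crossing into `T`. -/
lemma rtg_cross {r : V → V → Prop} {T : Set V} {b : V} (hb : b ∈ T) :
    ∀ {a : V}, Relation.ReflTransGen r a b → a ∉ T → ∃ p q, p ∉ T ∧ q ∈ T ∧ r p q := by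
  intro a h
  induction h using Relation.ReflTransGen.head_induction_on with
  | refl => intro hv; exact absurd hb hv
  | @head a c hstep _ ih =>
    intro hv
    by_cases hc : c ∈ T
    · exact ⟨a, c, hv, hc, hstep⟩
    · exact ih hc

/-- First-exit lemma: a directed path from inside `M` to outside `M` has a first
crossing arc, and the initial segment stays in `M`. -/
lemma reach_firstExit {S M : Set V} (hMS : M ⊆ S) {i : V} (hi : i ∉ M) :
    ∀ {v : V}, Relation.ReflTransGen (StepIn A S) v i → v ∈ M →
    ∃ k j, k ∈ M ∧ j ∈ S ∧ j ∉ M ∧ A k j ∧ ReachIn A M v k := by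
  intro v h
  induction h using Relation.ReflTransGen.head_induction_on with
  | refl => intro hv; exact absurd hv hi
  | @head a c hstep _ ih =>
    intro hv
    by_cases hc : c ∈ M
    · obtain ⟨k, j, hkM, hjS, hjM, hA, hreach⟩ := ih hc
      exact ⟨k, j, hkM, hjS, hjM, hA, reachIn_head ⟨hv, hc, hstep.2.2⟩ hreach⟩
    · exact ⟨a, c, hv, hstep.2.1, hc, hstep.2.2, reachIn_refl hv⟩

/-- Restriction lemma: if every vertex lying "between" `e` and `t` (w.r.t. reachability
in `S`) belongs to `S'`, then reachability holds already in `S'`. -/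
lemma reach_restrict {S S' : Set V} {t : V} :
    ∀ {e : V}, Relation.ReflTransGen (StepIn A S) e t → e ∈ S →
      (∀ y, ReachIn A S e y → ReachIn A S y t → y ∈ S') → ReachIn A S' e t := by
  intro e h
  induction h using Relation.ReflTransGen.head_induction_on with
  | refl =>
    intro ht hcond
    exact ⟨hcond t (reachIn_refl ht) (reachIn_refl ht), .refl⟩
  | @head a c hstep hrest ih =>
    intro haS hcond
    have hcS : c ∈ S := hstep.2.1
    have hc : ReachIn A S' c t :=
      ih hcS (fun y h1 h2 => hcond y (reachIn_head hstep h1) h2)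
    have haS' : a ∈ S' := hcond a (reachIn_refl haS) ⟨haS, .head hstep hrest⟩
    exact ⟨haS', .head ⟨haS', hc.1, hstep.2.2⟩ hc.2⟩

lemma ustep_symm {T : Set V} {x y : V} (h : UStep A T x y) : UStep A T y x :=
  ⟨h.2.1, h.1, h.2.2.1.symm, h.2.2.2.symm⟩

lemma urtg_symm {T : Set V} {x y : V} (h : Relation.ReflTransGen (UStep A T) x y) :
    Relation.ReflTransGen (UStep A T) y x := by
  induction h with
  | refl => exact .refl
  | tail _ hs ih => exact Relation.ReflTransGen.head (ustep_symm hs) ih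

lemma ustep_mono {S T : Set V} (hST : S ⊆ T) {u v : V} (h : UStep A S u v) : UStep A T u v :=
  ⟨hST h.1, hST h.2.1, h.2.2⟩

lemma urtg_mono {S T : Set V} (hST : S ⊆ T) {u v : V}
    (h : Relation.ReflTransGen (UStep A S) u v) : Relation.ReflTransGen (UStep A T) u v :=
  Relation.ReflTransGen.mono (fun _ _ hs => ustep_mono hST hs) _ _ h

lemma reach_ureach {T : Set V} (hirr : ∀ v : V, ¬ A v v) {x y : V} (h : ReachIn A T x y) :
    Relation.ReflTransGen (UStep A T) x y :=
  Relation.ReflTransGen.mono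
    (fun a b hab => ⟨hab.1, hab.2.1, fun he => absurd hab.2.2 (by rw [he]; exact hirr b), Or.inl hab.2.2⟩) _ _ h.2

/-- Avoidance lemma: if a set `C` can only be entered/exited through the single
vertex `z`, then chains between non-`C` vertices can avoid `C`. -/
lemma rtg_avoid {r r' : V → V → Prop} {C : Set V} {z b : V} (hb : b ∉ C)
    (hstep : ∀ x y, r x y → x ∉ C → y ∉ C → r' x y)
    (henter : ∀ x y, r x y → x ∉ C → y ∈ C → x = z)
    (hexit : ∀ x y, r x y → x ∈ C → y ∉ C → y = z) :
    ∀ {a : V}, Relation.ReflTransGen r a b →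
      (a ∉ C → Relation.ReflTransGen r' a b) ∧
      (a ∈ C → Relation.ReflTransGen r' z b) := by
  intro a h
  induction h using Relation.ReflTransGen.head_induction_on with
  | refl => exact ⟨fun _ => .refl, fun hb' => absurd hb' hb⟩
  | @head a c hstep' _ ih =>
    constructor
    · intro ha
      by_cases hc : c ∈ C
      · exact (henter a c hstep' ha hc) ▸ (ih.2 hc)
      · exact Relation.ReflTransGen.head (hstep a c hstep' ha hc) (ih.1 hc)
    · intro ha
      by_cases hc : c ∈ C
      · exact ih.2 hc
      · exact (hexit a c hstep' ha hc) ▸ (ih.1 hc)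

end Aux
section Ext

variable {A : V → V → Prop}

/-- Candidate extension sets used in the construction of an enlarged sub-block. -/
def SatF (A : V → V → Prop) (Y : Set V) (σ j k : V) (F : Set V) : Prop :=
  k ∈ F ∧ F ∩ Y = ∅ ∧ (∀ f ∈ F, ReachIn A (Y ∪ F) f σ) ∧
    (∀ f ∈ F, ∃ q ∈ Y \ {j}, Relation.ReflTransGen (UStep A ((Y ∪ F) \ {j})) f q)

lemma ext_minimize [Fintype V] {Y : Set V} {σ j w k : V}
    (hjY : j ∈ Y) (hwY : w ∈ Y) (hjw : w ≠ j) (hσY : σ ∈ Y)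
    (hconn : ∀ z : V, UConnected A (Y \ {z})) (hkY : k ∉ Y) (hakj : A k j) :
    ∀ n (F : Set V), F.ncard ≤ n → SatF A Y σ j k F →
      ∃ F', SatF A Y σ j k F' ∧ ∀ z : V, UConnected A ((Y ∪ F') \ {z}) := by
  intro n
  induction n with
  | zero =>
    intro F hn hS
    exfalso
    have hpos : 0 < F.ncard := (Set.ncard_pos (Set.toFinite F)).mpr ⟨k, hS.1⟩
    omega
  | succ n ih =>
    intro F hn hS
    obtain ⟨hkF, hFY, hreach, hconn3⟩ := hS
    by_cases hall : ∀ z : V, UConnected A ((Y ∪ F) \ {z})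
    · exact ⟨F, ⟨hkF, hFY, hreach, hconn3⟩, hall⟩
    push_neg at hall
    obtain ⟨z, hz⟩ := hall
    set C : Set V := {f | f ∈ F ∧ f ≠ z ∧
      ¬ ∃ q ∈ Y \ {z}, Relation.ReflTransGen (UStep A ((Y ∪ F) \ {z})) f q} with hC
    have hCF : C ⊆ F := fun x hx => hx.1
    have hCY : ∀ x, x ∈ C → x ∉ Y := fun x hx hxY =>
      (Set.eq_empty_iff_forall_notMem.mp hFY x) ⟨hx.1, hxY⟩
    have connY : ∀ x, x ∈ Y ∪ F → x ≠ z → x ∉ C →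
        ∃ q ∈ Y \ {z}, Relation.ReflTransGen (UStep A ((Y ∪ F) \ {z})) x q := by
      intro x hx hxz hxC
      rcases hx with hx | hx
      · exact ⟨x, ⟨hx, hxz⟩, .refl⟩
      · by_contra hno
        exact hxC ⟨hx, hxz, hno⟩
    have hCne : C.Nonempty := by
      by_contra hCne
      rw [Set.not_nonempty_iff_eq_empty] at hCne
      apply hz
      refine ⟨?_, ?_⟩
      · rcases eq_or_ne j z with h | h
        · refine ⟨w, Or.inl hwY, ?_⟩
          simp only [Set.mem_singleton_iff]
          rw [← h]; exact hjw
        · exact ⟨j, Or.inl hjY, by simp [h]⟩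
      · intro a ha b hb
        have key : ∀ x, x ∈ (Y ∪ F) \ {z} → ∃ q ∈ Y \ {z},
            Relation.ReflTransGen (UStep A ((Y ∪ F) \ {z})) x q := by
          intro x hx
          refine connY x hx.1 hx.2 ?_
          intro hxC
          rw [hCne] at hxC
          exact hxC
        obtain ⟨qa, hqa, hra⟩ := key a ha
        obtain ⟨qb, hqb, hrb⟩ := key b hb
        have hmid := (hconn z).2 qa hqa qb hqb
        have hmid' := urtg_mono
          (show Y \ {z} ⊆ (Y ∪ F) \ {z} from fun x hx => ⟨Or.inl hx.1, hx.2⟩) hmid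
        exact (hra.trans hmid').trans (urtg_symm hrb)
    have hkey : ∀ x y, x ∈ Y ∪ F → x ≠ z → x ∉ C → y ∈ C → (A x y ∨ A y x) → False := by
      intro x y hx hxz hxC hyC harc
      obtain ⟨q, hq, hr⟩ := connY x hx hxz hxC
      apply hyC.2.2
      refine ⟨q, hq, Relation.ReflTransGen.head ?_ hr⟩
      exact ⟨⟨Or.inr hyC.1, hyC.2.1⟩, ⟨hx, hxz⟩, fun he => hxC (by rw [← he]; exact hyC),
        harc.symm⟩
    have hkC : k ∉ C := by
      intro hkC
      rcases eq_or_ne j z with hjz | hjz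
      · obtain ⟨q, hq, hr⟩ := hconn3 k hkF
        refine hkC.2.2 ⟨q, by rw [← hjz]; exact hq, by rw [← hjz]; exact hr⟩
      · refine hkC.2.2 ⟨j, ⟨hjY, hjz⟩, Relation.ReflTransGen.single ?_⟩
        exact ⟨⟨Or.inr hkF, hkC.2.1⟩, ⟨Or.inl hjY, hjz⟩,
          fun he => hkY (by rw [he]; exact hjY), Or.inl hakj⟩
    have hSat' : SatF A Y σ j k (F \ C) := by
      refine ⟨⟨hkF, hkC⟩, ?_, ?_, ?_⟩
      · apply Set.eq_empty_iff_forall_notMem.mpr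
        intro x hx
        exact (Set.eq_empty_iff_forall_notMem.mp hFY x) ⟨hx.1.1, hx.2⟩
      · intro f hf
        have h0 := hreach f hf.1
        have hres := rtg_avoid (r := StepIn A (Y ∪ F)) (r' := StepIn A (Y ∪ (F \ C)))
          (C := C) (z := z) (b := σ) (fun hσC => hCY σ hσC hσY)
          (fun x y hxy hx hy => by
            refine ⟨?_, ?_, hxy.2.2⟩
            · rcases hxy.1 with h | h
              · exact Or.inl h
              · exact Or.inr ⟨h, hx⟩
            · rcases hxy.2.1 with h | h
              · exact Or.inl h
              · exact Or.inr ⟨h, hy⟩)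
          (fun x y hxy hx hy => by
            by_contra hne
            exact hkey x y hxy.1 hne hx hy (Or.inl hxy.2.2))
          (fun x y hxy hx hy => by
            by_contra hne
            exact hkey y x hxy.2.1 hne hy hx (Or.inr hxy.2.2))
          h0.2
        exact ⟨Or.inr hf, hres.1 hf.2⟩
      · intro f hf
        obtain ⟨q, hq, hr⟩ := hconn3 f hf.1
        have hqC : q ∉ C := fun hqC => hCY q hqC hq.1
        have hres := rtg_avoid (r := UStep A ((Y ∪ F) \ {j}))
          (r' := UStep A ((Y ∪ (F \ C)) \ {j}))
          (C := C) (z := z) (b := q) hqC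
          (fun x y hxy hx hy => by
            refine ⟨⟨?_, hxy.1.2⟩, ⟨?_, hxy.2.1.2⟩, hxy.2.2.1, hxy.2.2.2⟩
            · rcases hxy.1.1 with h | h
              · exact Or.inl h
              · exact Or.inr ⟨h, hx⟩
            · rcases hxy.2.1.1 with h | h
              · exact Or.inl h
              · exact Or.inr ⟨h, hy⟩)
          (fun x y hxy hx hy => by
            by_contra hne
            exact hkey x y hxy.1.1 hne hx hy hxy.2.2.2)
          (fun x y hxy hx hy => by
            by_contra hne
            exact hkey y x hxy.2.1.1 hne hy hx hxy.2.2.2.symm)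
          hr
        exact ⟨q, hq, hres.1 hf.2⟩
    have hlt : (F \ C).ncard < F.ncard := by
      apply Set.ncard_lt_ncard _ F.toFinite
      rw [ssubset_iff_subset_ne]
      refine ⟨Set.diff_subset, ?_⟩
      obtain ⟨c, hc⟩ := hCne
      intro he
      have hcm : c ∈ F \ C := by rw [he]; exact hCF hc
      exact hcm.2 hc
    exact ih (F \ C) (by omega) hSat'

lemma ext_subblock [Fintype V] (hirr : ∀ v : V, ¬ A v v) {Y : Set V} {σ j w k u : V}
    (hjY : j ∈ Y) (hwY : w ∈ Y) (hjw : w ≠ j) (hσY : σ ∈ Y)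
    (hsink : ∀ y ∈ Y, ReachIn A Y y σ)
    (hconn : ∀ z : V, UConnected A (Y \ {z}))
    (hkY : k ∉ Y) (hakj : A k j)
    (h1 : ReachIn A {j}ᶜ u k) (h2 : ReachIn A {j}ᶜ u w) :
    ∃ B : Set V, DirectedSubBlock A B ∧ Y ∪ {k} ⊆ B := by
  have hkj : k ≠ j := fun he => hkY (by rw [he]; exact hjY)
  set F₀ : Set V := {x | x ∉ Y ∧ ReachIn A {j}ᶜ u x ∧
    (ReachIn A {j}ᶜ x k ∨ ReachIn A {j}ᶜ x w)} with hF₀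
  have hkmem : k ∈ ({j}ᶜ : Set V) := by simp [hkj]
  have hkF₀ : k ∈ F₀ := ⟨hkY, h1, Or.inl (reachIn_refl hkmem)⟩
  have hmemS' : ∀ y, y ∈ ({j}ᶜ : Set V) → ReachIn A {j}ᶜ u y →
      (ReachIn A {j}ᶜ y k ∨ ReachIn A {j}ᶜ y w) → y ∈ (Y ∪ F₀) \ {j} := by
    intro y hy hr ho
    by_cases hyY : y ∈ Y
    · exact ⟨Or.inl hyY, hy⟩
    · exact ⟨Or.inr ⟨hyY, hr, ho⟩, hy⟩
  have hresk : ∀ x, ReachIn A {j}ᶜ u x → ReachIn A {j}ᶜ x k →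
      ReachIn A ((Y ∪ F₀) \ {j}) x k := by
    intro x hux hxk
    refine reach_restrict hxk.2 hxk.1 ?_
    intro y h1y h2y
    exact hmemS' y (reachIn_mem_right h1y) (reachIn_trans hux h1y) (Or.inl h2y)
  have hresw : ∀ x, ReachIn A {j}ᶜ u x → ReachIn A {j}ᶜ x w →
      ReachIn A ((Y ∪ F₀) \ {j}) x w := by
    intro x hux hxw
    refine reach_restrict hxw.2 hxw.1 ?_
    intro y h1y h2y
    exact hmemS' y (reachIn_mem_right h1y) (reachIn_trans hux h1y) (Or.inr h2y)
  have hSat0 : SatF A Y σ j k F₀ := by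
    refine ⟨hkF₀, ?_, ?_, ?_⟩
    · apply Set.eq_empty_iff_forall_notMem.mpr
      intro x hx
      exact hx.1.1 hx.2
    · intro f hf
      rcases hf.2.2 with hk' | hw'
      · have r1 := hresk f hf.2.1 hk'
        refine reachIn_trans (reachIn_mono Set.diff_subset r1) ?_
        exact reachIn_trans ⟨Or.inr hkF₀, .single ⟨Or.inr hkF₀, Or.inl hjY, hakj⟩⟩
          (reachIn_mono Set.subset_union_left (hsink j hjY))
      · have r1 := hresw f hf.2.1 hw'
        exact reachIn_trans (reachIn_mono Set.diff_subset r1)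
          (reachIn_mono Set.subset_union_left (hsink w hwY))
    · intro f hf
      have huj : u ∈ ({j}ᶜ : Set V) := h1.1
      have hu_k : ReachIn A ((Y ∪ F₀) \ {j}) u k := hresk u (reachIn_refl huj) h1
      have hu_w : ReachIn A ((Y ∪ F₀) \ {j}) u w := hresw u (reachIn_refl huj) h2
      rcases hf.2.2 with hk' | hw'
      · have r1 := hresk f hf.2.1 hk'
        exact ⟨w, ⟨hwY, hjw⟩, ((reach_ureach hirr r1).trans
          (urtg_symm (reach_ureach hirr hu_k))).trans (reach_ureach hirr hu_w)⟩
      · exact ⟨w, ⟨hwY, hjw⟩, reach_ureach hirr (hresw f hf.2.1 hw')⟩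
  obtain ⟨F, hSat, hFconn⟩ :=
    ext_minimize hjY hwY hjw hσY hconn hkY hakj F₀.ncard F₀ le_rfl hSat0
  obtain ⟨hkF, hFY, hreachF, hconn3⟩ := hSat
  have hwk : w ≠ k := fun he => hkY (by rw [← he]; exact hwY)
  refine ⟨Y ∪ F, ⟨⟨σ, Or.inl hσY, ?_⟩, ?_, ?_, fun v _ => hFconn v⟩, ?_⟩
  · intro x hx
    rcases hx with hx | hx
    · exact reachIn_mono Set.subset_union_left (hsink x hx)
    · exact hreachF x hx
  · -- 3 ≤ ncard
    have h3 : ({j, w, k} : Set V).ncard = 3 := by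
      rw [Set.ncard_insert_of_notMem (by simp [hjw.symm, hkj]; tauto), Set.ncard_pair hwk]
    calc (3 : ℕ) = ({j, w, k} : Set V).ncard := h3.symm
      _ ≤ (Y ∪ F).ncard := by
          apply Set.ncard_le_ncard _ (Set.toFinite _)
          intro x hx
          rcases hx with h | h | h
          · exact Or.inl (by rw [h]; exact hjY)
          · exact Or.inl (by rw [h]; exact hwY)
          · exact Or.inr (by rw [h]; exact hkF)
  · -- UConnected (Y ∪ F)
    have hYc : UConnected A Y := by
      have h := hconn k
      rwa [Set.diff_singleton_eq_self hkY] at h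
    refine ⟨⟨j, Or.inl hjY⟩, ?_⟩
    have connB : ∀ x ∈ Y ∪ F, ∃ q ∈ Y, Relation.ReflTransGen (UStep A (Y ∪ F)) x q := by
      intro x hx
      rcases hx with hx | hx
      · exact ⟨x, hx, .refl⟩
      · obtain ⟨q, hq, hr⟩ := hconn3 x hx
        exact ⟨q, hq.1, urtg_mono Set.diff_subset hr⟩
    intro a ha b hb
    obtain ⟨qa, hqa, hra⟩ := connB a ha
    obtain ⟨qb, hqb, hrb⟩ := connB b hb
    exact (hra.trans (urtg_mono Set.subset_union_left (hYc.2 qa hqa qb hqb))).trans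
      (urtg_symm hrb)
  · intro x hx
    rcases hx with hx | hx
    · exact Or.inl hx
    · exact Or.inr (by rw [hx]; exact hkF)

end Ext
section Main

variable {A : V → V → Prop}

lemma connectedPair_ncard {P : Set V} (h : ConnectedPair A P) : P.ncard = 2 := by
  obtain ⟨i, j, hij, rfl, _⟩ := h
  exact Set.ncard_pair hij

lemma pair_resolve {P : Set V} (h : ConnectedPair A P) {j w : V}
    (hj : j ∈ P) (hw : w ∈ P) (hjw : w ≠ j) :
    (A j w ∨ A w j) ∧ P = {j, w} := by
  obtain ⟨a, b, hab, rfl, harc⟩ := h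
  simp only [Set.mem_insert_iff, Set.mem_singleton_iff] at hj hw
  rcases hj with hj | hj <;> rcases hw with hw | hw <;> subst hj <;> subst hw
  · exact absurd rfl hjw
  · exact ⟨harc, rfl⟩
  · exact ⟨harc.symm, Set.pair_comm _ _⟩
  · exact absurd rfl hjw

/-- Every set generable from a connected pair is contained in a directed sub-block
(provided at least one generation step was taken). -/
lemma generated_subblock [Fintype V] (hirr : ∀ v : V, ¬ A v v) {W : Set V}
    (hgen : GeneratedFromPair A W) (h3 : 3 ≤ W.ncard) :
    ∃ U : Set V, DirectedSubBlock A U ∧ W ⊆ U := by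
  obtain ⟨P, hP, hchain⟩ := hgen
  have key : ConnectedPair A W ∨ ∃ U : Set V, DirectedSubBlock A U ∧ W ⊆ U := by
    clear h3
    induction hchain with
    | refl => exact Or.inl hP
    | @tail W₁ W₂ _ hstep ih =>
      obtain ⟨k, hkW, hW2, j, hjW, hAkj, hndp⟩ := hstep
      rw [DynPart, ← ne_eq, ← Set.nonempty_iff_ne_empty] at hndp
      obtain ⟨u, hu1, hu2⟩ := hndp
      obtain ⟨x, hx, hrk0⟩ := hu1
      rw [Set.mem_singleton_iff] at hx
      have hrk : ReachIn A {j}ᶜ u k := by rwa [hx] at hrk0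
      obtain ⟨w, hw, hrw⟩ := hu2
      refine Or.inr ?_
      rcases ih with hpair | ⟨U, hU, hWU⟩
      · -- extend a connected pair to a sub-block
        obtain ⟨harc, hPeq⟩ := pair_resolve hpair hjW hw.1 hw.2
        have hwj : w ≠ j := hw.2
        have hconn : ∀ z : V, UConnected A (W₁ \ {z}) := by
          intro z
          by_cases hzj : z = j
          · subst hzj
            rw [hPeq, Set.pair_diff_left hwj.symm]
            refine ⟨⟨w, rfl⟩, ?_⟩
            intro a ha b hb
            simp only [Set.mem_singleton_iff] at ha hb
            subst ha; subst hb; exact .refl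
          · by_cases hzw : z = w
            · subst hzw
              rw [hPeq, Set.pair_diff_right hwj.symm]
              refine ⟨⟨j, rfl⟩, ?_⟩
              intro a ha b hb
              simp only [Set.mem_singleton_iff] at ha hb
              subst ha; subst hb; exact .refl
            · have hzP : z ∉ W₁ := by
                rw [hPeq]
                simp only [Set.mem_insert_iff, Set.mem_singleton_iff]
                push_neg
                exact ⟨hzj, hzw⟩
              rw [Set.diff_singleton_eq_self hzP]
              refine ⟨⟨j, hjW⟩, ?_⟩
              have hstepjw : Relation.ReflTransGen (UStep A W₁) j w :=
                .single ⟨hjW, hw.1, fun h => hwj h.symm, harc⟩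
              intro a ha b hb
              rw [hPeq] at ha hb
              simp only [Set.mem_insert_iff, Set.mem_singleton_iff] at ha hb
              rcases ha with ha | ha <;> rcases hb with hb | hb <;> subst ha <;> subst hb
              · exact .refl
              · exact hstepjw
              · exact urtg_symm hstepjw
              · exact .refl
        rcases harc with hjw' | hwj'
        · -- arc j → w : sink is w
          obtain ⟨B, hB, hsub⟩ := ext_subblock hirr hjW hw.1 hw.2 hw.1
            (by
              intro y hy
              rw [hPeq] at hy
              simp only [Set.mem_insert_iff, Set.mem_singleton_iff] at hy
              rcases hy with hy | hy <;> subst hy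
              · exact ⟨hjW, .single ⟨hjW, hw.1, hjw'⟩⟩
              · exact reachIn_refl hw.1)
            hconn hkW hAkj hrk hrw
          exact ⟨B, hB, by rw [hW2]; exact hsub⟩
        · -- arc w → j : sink is j
          obtain ⟨B, hB, hsub⟩ := ext_subblock hirr hjW hw.1 hw.2 hjW
            (by
              intro y hy
              rw [hPeq] at hy
              simp only [Set.mem_insert_iff, Set.mem_singleton_iff] at hy
              rcases hy with hy | hy <;> subst hy
              · exact reachIn_refl hjW
              · exact ⟨hw.1, .single ⟨hw.1, hjW, hwj'⟩⟩)
            hconn hkW hAkj hrk hrw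
          exact ⟨B, hB, by rw [hW2]; exact hsub⟩
      · by_cases hkU : k ∈ U
        · refine ⟨U, hU, ?_⟩
          rw [hW2]
          exact Set.union_subset hWU (by simpa using hkU)
        · obtain ⟨i0, hi0, hsinkU⟩ := hU.1
          have hconn : ∀ z : V, UConnected A (U \ {z}) := by
            intro z
            by_cases hzU : z ∈ U
            · exact hU.2.2.2 z hzU
            · rw [Set.diff_singleton_eq_self hzU]
              exact hU.2.2.1
          obtain ⟨B, hB, hsub⟩ := ext_subblock hirr (hWU hjW) (hWU hw.1) hw.2 hi0
            hsinkU hconn hkU hAkj hrk hrw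
          refine ⟨B, hB, ?_⟩
          rw [hW2]
          exact Set.union_subset (hWU.trans (Set.subset_union_left.trans hsub))
            ((Set.subset_union_right.trans hsub))
  rcases key with hpair | h
  · have := connectedPair_ncard hpair
    omega
  · exact h

/-- One valid exact generation step always exists while building up a sub-block. -/
lemma step_exists [Fintype V] {W : Set V} {i : V} (hiW : i ∈ W)
    (hsink : ∀ v ∈ W, ReachIn A W v i)
    (hbic : Biconnected A W) {Wt : Set V} (hsub : Wt ⊆ W) (hiWt : i ∈ Wt)
    (h2 : 2 ≤ Wt.ncard) (hne : Wt ≠ W) :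
    ∃ k, k ∈ W ∧ k ∉ Wt ∧ ExactStep A Wt (Wt ∪ {k}) := by
  -- find some arc into Wt from outside
  have hex : ∃ v, v ∈ W ∧ v ∉ Wt := by
    by_contra h
    push_neg at h
    exact hne (Set.Subset.antisymm hsub (fun x hx => h x hx))
  obtain ⟨v, hvW, hvWt⟩ := hex
  obtain ⟨k₀, j, hk₀Wt, hjWt, hstep⟩ := rtg_cross hiWt (hsink v hvW).2 hvWt
  have hk₀W : k₀ ∈ W := hstep.1
  have hjW : j ∈ W := hstep.2.1
  have hAk₀j : A k₀ j := hstep.2.2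
  have hk₀j : k₀ ≠ j := fun h => hk₀Wt (h ▸ hjWt)
  set S1 : Set V := InSet A (W \ {j}) {k₀} with hS1
  set S2 : Set V := InSet A (W \ {j}) (Wt \ {j}) with hS2
  have hS1cl : ∀ x y, A x y → x ∈ W \ {j} → y ∈ S1 → x ∈ S1 := by
    intro x y hxy hx hy
    obtain ⟨t, ht, hr⟩ := hy
    exact ⟨t, ht, reachIn_head ⟨hx, hr.1, hxy⟩ hr⟩
  have hS2cl : ∀ x y, A x y → x ∈ W \ {j} → y ∈ S2 → x ∈ S2 := by
    intro x y hxy hx hy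
    obtain ⟨t, ht, hr⟩ := hy
    exact ⟨t, ht, reachIn_head ⟨hx, hr.1, hxy⟩ hr⟩
  have hWjsub : W \ {j} ⊆ ({j}ᶜ : Set V) := fun x hx => hx.2
  by_cases hint : (S1 ∩ S2).Nonempty
  · obtain ⟨q, hq1, hq2⟩ := hint
    refine ⟨k₀, hk₀W, hk₀Wt, k₀, hk₀Wt, rfl, j, hjWt, hAk₀j, ?_⟩
    intro hdp
    apply Set.eq_empty_iff_forall_notMem.mp hdp q
    obtain ⟨t, ht, hr⟩ := hq1
    obtain ⟨t2, ht2, hr2⟩ := hq2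
    exact ⟨⟨t, ht, reachIn_mono hWjsub hr⟩, ⟨t2, ht2, reachIn_mono hWjsub hr2⟩⟩
  · have hdisj : ∀ x, x ∈ S1 → x ∈ S2 → False := by
      intro x h1 h2
      exact hint ⟨x, h1, h2⟩
    have hk₀S1 : k₀ ∈ S1 := ⟨k₀, rfl, reachIn_refl ⟨hk₀W, hk₀j⟩⟩
    obtain ⟨w₀, hw₀Wt, hw₀j⟩ := Set.exists_ne_of_one_lt_ncard (show 1 < Wt.ncard by omega) j
    have hw₀S2 : w₀ ∈ S2 := ⟨w₀, ⟨hw₀Wt, hw₀j⟩, reachIn_refl ⟨hsub hw₀Wt, hw₀j⟩⟩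
    have hk₀S2 : k₀ ∉ S2 := fun h => hdisj k₀ hk₀S1 h
    -- underlying connectivity of W \ {j}
    have hUconn := hbic.2.2 j hjW
    have hrtg := hUconn.2 k₀ ⟨hk₀W, hk₀j⟩ w₀ ⟨hsub hw₀Wt, hw₀j⟩
    obtain ⟨p, q, hpS2, hqS2, hpq⟩ := rtg_cross hw₀S2 hrtg hk₀S2
    -- the crossing underlying edge must be an arc from S2 out
    have hqp : A q p := by
      rcases hpq.2.2.2 with h | h
      · exact absurd (hS2cl p q h hpq.1 hqS2) hpS2
      · exact h
    have hpS1 : p ∉ S1 := by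
      intro hp
      exact hdisj q (hS1cl q p hqp hpq.2.1 hp) hqS2
    -- M := the absorbing part
    set M : Set V := (W \ {j}) \ (S1 ∪ S2) with hM
    have hpM : p ∈ M := ⟨hpq.1, fun h => h.elim hpS1 hpS2⟩
    have hiM : i ∉ M := by
      intro hiM2
      rcases eq_or_ne i j with h | h
      · exact hiM2.1.2 h
      · exact hiM2.2 (Or.inr ⟨i, ⟨hiWt, h⟩, reachIn_refl ⟨hiW, h⟩⟩)
    have hMW : M ⊆ W := fun x hx => hx.1.1
    obtain ⟨m, j', hmM, hj'W, hj'M, hAmj', hreachM⟩ :=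
      reach_firstExit hMW hiM (hsink p (hMW hpM)).2 hpM
    have hj'j : j' = j := by
      by_contra hne'
      have hj'Wj : j' ∈ W \ {j} := ⟨hj'W, hne'⟩
      have hmWj : m ∈ W \ {j} := hmM.1
      rcases (show j' ∈ S1 ∪ S2 ∨ j' ∈ M from by
        by_cases h : j' ∈ S1 ∪ S2
        · exact Or.inl h
        · exact Or.inr ⟨hj'Wj, h⟩) with h | h
      · rcases h with h | h
        · exact hmM.2 (Or.inl (hS1cl m j' hAmj' hmWj h))
        · exact hmM.2 (Or.inr (hS2cl m j' hAmj' hmWj h))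
      · exact hj'M h
    rw [hj'j] at hAmj'
    have hmWt : m ∉ Wt := by
      intro hmWt
      exact hmM.2 (Or.inr ⟨m, ⟨hmWt, hmM.1.2⟩, reachIn_refl hmM.1⟩)
    refine ⟨m, hmM.1.1, hmWt, m, hmWt, rfl, j, hjWt, hAmj', ?_⟩
    intro hdp
    apply Set.eq_empty_iff_forall_notMem.mp hdp q
    have hq_m : ReachIn A (W \ {j}) q m :=
      reachIn_head ⟨hpq.2.1, hpM.1, hqp⟩ (reachIn_mono (fun x hx => hx.1) hreachM)
    obtain ⟨t2, ht2, hr2⟩ := hqS2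
    exact ⟨⟨m, rfl, reachIn_mono hWjsub hq_m⟩, ⟨t2, ht2, reachIn_mono hWjsub hr2⟩⟩

end Main
section Final

variable {A : V → V → Prop}

lemma reach_W [Fintype V] {W : Set V} {i : V} (hiW : i ∈ W)
    (hsink : ∀ v ∈ W, ReachIn A W v i) (hbic : Biconnected A W) :
    ∀ n (Wt : Set V), Wt ⊆ W → i ∈ Wt → 2 ≤ Wt.ncard → W.ncard ≤ Wt.ncard + n →
      Relation.ReflTransGen (ExactStep A) Wt W := by
  intro n
  induction n with
  | zero =>
    intro Wt hsub hi h2 hcard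
    have hWt : Wt = W := Set.eq_of_subset_of_ncard_le hsub (by omega) (Set.toFinite W)
    rw [hWt]
  | succ n ih =>
    intro Wt hsub hi h2 hcard
    by_cases he : Wt = W
    · rw [he]
    · obtain ⟨k, hkW, hkWt, hstep⟩ := step_exists hiW hsink hbic hsub hi h2 he
      have hcard' : (Wt ∪ {k}).ncard = Wt.ncard + 1 := by
        rw [Set.union_singleton, Set.ncard_insert_of_notMem hkWt (Set.toFinite Wt)]
      refine Relation.ReflTransGen.head hstep ?_
      exact ih (Wt ∪ {k}) (Set.union_subset hsub (by simpa using hkW))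
        (Or.inl hi) (by omega) (by omega)

/-- Every directed sub-block can be generated from a connected pair. -/
lemma subblock_generated [Fintype V] {W : Set V} (hW : DirectedSubBlock A W) :
    GeneratedFromPair A W := by
  obtain ⟨i, hiW, hsink⟩ := hW.1
  have h3 := hW.2.1
  obtain ⟨v, hvW, hvi⟩ := Set.exists_ne_of_one_lt_ncard (show 1 < W.ncard by omega) i
  obtain ⟨x, j, hxT, hjT, hstep⟩ := rtg_cross (show i ∈ ({i} : Set V) from rfl)
    (hsink v hvW).2 (by simpa using hvi)
  rw [Set.mem_singleton_iff] at hjT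
  rw [hjT] at hstep
  have hxi : x ≠ i := by simpa using hxT
  have hxW : x ∈ W := hstep.1
  refine ⟨{x, i}, ⟨x, i, hxi, rfl, Or.inl hstep.2.2⟩, ?_⟩
  refine reach_W hiW hsink hW.2 W.ncard {x, i} ?_ (by simp) ?_ ?_
  · intro y hy
    simp only [Set.mem_insert_iff, Set.mem_singleton_iff] at hy
    rcases hy with hy | hy <;> subst hy
    · exact hxW
    · exact hiW
  · rw [Set.ncard_pair hxi]
  · rw [Set.ncard_pair hxi]
    omega

end Final

/-- Theorem 3.3, combinatorial form: `m` is the maximum of `|W|` over all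
`W` that are connected pairs or generable from a connected pair. If `D` has a directed
sub-block then `m` equals the maximum cardinality of a transmission block; otherwise `m = 2`. -/
theorem stmt11 [Fintype V] (A : V → V → Prop) (hirr : ∀ v : V, ¬ A v v)
    (hA : ∃ u v : V, A u v) (m : ℕ)
    (hm_mem : ∃ W : Set V,
      (ConnectedPair A W ∨ (3 ≤ W.ncard ∧ GeneratedFromPair A W)) ∧ W.ncard = m)
    (hm_max : ∀ W : Set V,
      (ConnectedPair A W ∨ (3 ≤ W.ncard ∧ GeneratedFromPair A W)) → W.ncard ≤ m) :
    ((∃ X : Set V, DirectedSubBlock A X) →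
      ∃ U : Set V, TransmissionBlock A U ∧ U.ncard = m ∧
        ∀ U' : Set V, TransmissionBlock A U' → U'.ncard ≤ m) ∧
    ((¬ ∃ X : Set V, DirectedSubBlock A X) → m = 2) := by
  constructor
  · rintro ⟨X, hX⟩
    have hfin : ({Z : Set V | DirectedSubBlock A Z}).Finite := Set.toFinite _
    obtain ⟨U, hU, hUmax⟩ := Set.Finite.exists_maximalFor Set.ncard _ hfin ⟨X, hX⟩
    have hU' : DirectedSubBlock A U := hU
    have hle : ∀ U₁ : Set V, DirectedSubBlock A U₁ → U₁.ncard ≤ U.ncard := by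
      intro U₁ hU₁
      by_contra hlt
      push_neg at hlt
      have := hUmax (j := U₁) hU₁ (le_of_lt hlt)
      omega
    have hUm : U.ncard ≤ m := hm_max U (Or.inr ⟨hU'.2.1, subblock_generated hU'⟩)
    have hmU : m ≤ U.ncard := by
      obtain ⟨W, hWp, hWm⟩ := hm_mem
      rcases hWp with hp | ⟨h3, hg⟩
      · have h2 := connectedPair_ncard hp
        have := hU'.2.1
        omega
      · obtain ⟨U₂, hU₂, hsub⟩ := generated_subblock hirr hg h3
        have := Set.ncard_le_ncard hsub (Set.toFinite U₂)
        have := hle U₂ hU₂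
        omega
    refine ⟨U, ⟨hU', ?_⟩, by omega, ?_⟩
    · intro U₂ hss hd
      have h1 := Set.ncard_lt_ncard hss (Set.toFinite U₂)
      have h2 := hle U₂ hd
      omega
    · intro U₁ hU₁
      exact hm_max U₁ (Or.inr ⟨hU₁.1.2.1, subblock_generated hU₁.1⟩)
  · intro hno
    obtain ⟨W, hWp, hWm⟩ := hm_mem
    rcases hWp with hp | ⟨h3, hg⟩
    · rw [← hWm, connectedPair_ncard hp]
    · obtain ⟨U₂, hU₂, _⟩ := generated_subblock hirr hg h3
      exact absurd ⟨U₂, hU₂⟩ hno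
end

section
/- (Lemma B.1 of the paper.) Let x ∈ ℕ and let W ⊆ V be either a connected pair or an x-generable set. Then some vertex of W is reachable in D[W] from every other vertex of W. -/
open Set

variable {V : Type*}

lemma ReachIn.mono' {A : V → V → Prop} {S S' : Set V} (hSS : S ⊆ S') {u v : V}
    (h : ReachIn A S u v) : ReachIn A S' u v :=
  ⟨hSS h.1, Relation.ReflTransGen.mono (r := StepIn A S) (p := StepIn A S') (fun _ _ ⟨ha, hb, hab⟩ => ⟨hSS ha, hSS hb, hab⟩) _ _ h.2⟩

lemma pair_sink {A : V → V → Prop} {W : Set V} (h : ConnectedPair A W) :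
    ∃ i ∈ W, ∀ j ∈ W, ReachIn A W j i := by
  obtain ⟨i, j, hne, rfl, harc | harc⟩ := h
  · refine ⟨j, Or.inr rfl, ?_⟩
    rintro u (rfl | rfl)
    · exact ⟨Or.inl rfl, Relation.ReflTransGen.single ⟨Or.inl rfl, Or.inr rfl, harc⟩⟩
    · exact ⟨Or.inr rfl, Relation.ReflTransGen.refl⟩
  · refine ⟨i, Or.inl rfl, ?_⟩
    rintro u (rfl | rfl)
    · exact ⟨Or.inl rfl, Relation.ReflTransGen.refl⟩
    · exact ⟨Or.inr rfl, Relation.ReflTransGen.single ⟨Or.inr rfl, Or.inl rfl, harc⟩⟩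

lemma step_sink {A : V → V → Prop} {x : ℕ} {W W' : Set V}
    (hstep : CycleStep A x W W')
    (h : ∃ i ∈ W, ∀ j ∈ W, ReachIn A W j i) :
    ∃ i ∈ W', ∀ j ∈ W', ReachIn A W' j i := by
  obtain ⟨k, _, rfl, j, hj, hkj, -⟩ := hstep
  obtain ⟨i, hi, hall⟩ := h
  refine ⟨i, Or.inl hi, ?_⟩
  rintro u (hu | rfl)
  · exact (hall u hu).mono' Set.subset_union_left
  · exact ⟨Or.inr rfl,
      Relation.ReflTransGen.head ⟨Or.inr rfl, Or.inl hj, hkj⟩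
        ((hall j hj).mono' Set.subset_union_left).2⟩

/-- Lemma B.1. -/
theorem stmt12 [Fintype V] (A : V → V → Prop) (hirr : ∀ v : V, ¬ A v v)
    (x : ℕ) (W : Set V)
    (h : ConnectedPair A W ∨ (3 ≤ W.ncard ∧ XGenerable A x W)) :
    ∃ i ∈ W, ∀ j ∈ W, ReachIn A W j i := by
  rcases h with h | ⟨-, P, hP, hchain⟩
  · exact pair_sink h
  · induction hchain with
    | refl => exact pair_sink hP
    | tail hst hstep ih => exact step_sink hstep ih
end

section
/- (Core step of Theorem B.1 of the paper.) Suppose n ≥ 3 and every directed sub-block of D has at most n vertices, and let x ∈ ℕ with x ≥ n − 2. Let W ⊆ V with |W| ≥ 2 be such that some vertex of W is reachable in D[W] from every other vertex of W, let i ∈ W and let j ∈ V ∖ W with (j, i) ∈ A. If i is cycle-partitioning at order x with respect to {j} and W ∖ {i}, then i is dynamically partitioning with respect to {j} and W ∖ {i}. -/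
open Set

variable {V : Type*}

section Helpers

variable {r r' : V → V → Prop} {A : V → V → Prop}

/-- `Walk r u l v`: `l` is the list of successive vertices after `u` of a walk
from `u` to `v` (so `v` is the last element of `u :: l`). -/
def Walk (r : V → V → Prop) : V → List V → V → Prop
  | u, [], v => u = v
  | u, b :: l, v => r u b ∧ Walk r b l v

theorem Walk.imp (h : ∀ a b, r a b → r' a b) :
    ∀ {u : V} {l : List V} {v : V}, Walk r u l v → Walk r' u l v
  | _, [], _, hw => hw
  | _, _ :: _, _, ⟨hs, hw⟩ => ⟨h _ _ hs, hw.imp h⟩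

theorem walk_append : ∀ {u : V} {l₁ : List V} {v : V} {l₂ : List V} {w : V},
    Walk r u l₁ v → Walk r v l₂ w → Walk r u (l₁ ++ l₂) w
  | _, [], _, _, _, h1, h2 => by cases h1; exact h2
  | _, _ :: _, _, _, _, ⟨hs, hw⟩, h2 => ⟨hs, walk_append hw h2⟩

theorem walk_rtg : ∀ {u : V} {l : List V} {v : V},
    Walk r u l v → Relation.ReflTransGen r u v
  | _, [], _, h => by cases h; rfl
  | _, _ :: _, _, ⟨hs, hw⟩ => Relation.ReflTransGen.head hs (walk_rtg hw)

theorem rtg_walk {u v : V} (h : Relation.ReflTransGen r u v) : ∃ l, Walk r u l v := by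
  induction h with
  | refl => exact ⟨[], rfl⟩
  | tail _ hs ih =>
      obtain ⟨l, hl⟩ := ih
      exact ⟨l ++ [_], walk_append hl ⟨hs, rfl⟩⟩

theorem walk_stepsLe : ∀ {u : V} {l : List V} {v : V} {n : ℕ},
    Walk r u l v → l.length ≤ n → StepsLe r n u v
  | _, [], _, 0, h, _ => h
  | _, [], _, _ + 1, h, _ => Or.inl h
  | _, _ :: _, _, n + 1, ⟨hs, hw⟩, hn =>
      Or.inr ⟨_, hs, walk_stepsLe hw (Nat.le_of_succ_le_succ hn)⟩

theorem stepsLe_walk : ∀ {n : ℕ} {u v : V},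
    StepsLe r n u v → ∃ l, l.length ≤ n ∧ Walk r u l v
  | 0, _, _, h => ⟨[], le_rfl, h⟩
  | _ + 1, _, _, Or.inl h => ⟨[], Nat.zero_le _, h⟩
  | n + 1, _, _, Or.inr ⟨w, hs, hw⟩ => by
      obtain ⟨l, hl, hwl⟩ := stepsLe_walk hw
      exact ⟨w :: l, Nat.succ_le_succ hl, hs, hwl⟩

theorem walk_mem_S {S : Set V} : ∀ {u : V} {l : List V} {v : V},
    Walk (StepIn A S) u l v → ∀ z ∈ l, z ∈ S
  | _, _ :: _, _, ⟨hs, hw⟩, z, hz => by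
      rcases List.mem_cons.mp hz with h | h
      · exact h ▸ hs.2.1
      · exact walk_mem_S hw z h

theorem walk_last_mem : ∀ {u : V} {l : List V} {v : V},
    Walk r u l v → v ∈ u :: l
  | _, [], _, h => by cases h; exact List.mem_singleton_self _
  | _, _ :: _, _, ⟨_, hw⟩ => List.mem_cons_of_mem _ (walk_last_mem hw)

theorem walk_end_unique : ∀ {u : V} {l : List V} {v v' : V},
    Walk r u l v → Walk r u l v' → v = v'
  | _, [], _, _, h1, h2 => h1.symm.trans h2
  | _, _ :: _, _, _, ⟨_, h1⟩, ⟨_, h2⟩ => walk_end_unique h1 h2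

theorem walk_eq_concat : ∀ {u : V} {l : List V} {v : V},
    Walk r u l v → l = [] ∨ ∃ γ, l = γ ++ [v]
  | _, [], _, _ => Or.inl rfl
  | _, b :: t, v, ⟨_, hw⟩ => by
      rcases walk_eq_concat hw with rfl | ⟨γ, rfl⟩
      · cases hw; exact Or.inr ⟨[], rfl⟩
      · exact Or.inr ⟨b :: γ, rfl⟩

theorem walk_split : ∀ {u : V} {l : List V} {v z : V}, Walk r u l v → z ∈ l →
    ∃ s t, l = s ++ z :: t ∧ Walk r u (s ++ [z]) z ∧ Walk r z t v
  | _, b :: l, v, z, ⟨hs, hw⟩, hz => by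
      rcases List.mem_cons.mp hz with h | h
      · subst h; exact ⟨[], l, rfl, ⟨hs, rfl⟩, hw⟩
      · obtain ⟨s, t, h1, h2, h3⟩ := walk_split hw h
        exact ⟨b :: s, t, by simp [h1], ⟨hs, h2⟩, h3⟩

theorem walk_nodup : ∀ (n : ℕ) {u : V} {l : List V} {v : V}, l.length ≤ n →
    Walk r u l v →
    ∃ l', Walk r u l' v ∧ l'.length ≤ l.length ∧ (u :: l').Nodup ∧ ∀ z ∈ l', z ∈ l := by
  intro n
  induction n with
  | zero =>
      intro u l v hl hw
      rw [Nat.le_zero, List.length_eq_zero_iff] at hl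
      subst hl
      exact ⟨[], hw, le_rfl, List.nodup_singleton _, by simp⟩
  | succ n ih =>
      intro u l v hl hw
      by_cases hu : u ∈ l
      · obtain ⟨s, t, h1, _, h3⟩ := walk_split hw hu
        have ht : t.length ≤ n := by
          subst h1; simp at hl ⊢; omega
        obtain ⟨l', hw', hlen, hnd, hsub⟩ := ih ht h3
        refine ⟨l', hw', ?_, hnd, fun z hz => by subst h1; simp [hsub z hz]⟩
        subst h1; simp; omega
      · match l, hw with
        | [], hw => exact ⟨[], hw, le_rfl, List.nodup_singleton _, by simp⟩
        | b :: t, ⟨hs, hw⟩ =>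
            have ht : t.length ≤ n := by simp at hl; omega
            obtain ⟨l', hw', hlen, hnd, hsub⟩ := ih ht hw
            refine ⟨b :: l', ⟨hs, hw'⟩, by simpa using hlen, ?_, ?_⟩
            · refine List.nodup_cons.mpr ⟨?_, hnd⟩
              intro hmem
              rcases List.mem_cons.mp hmem with h | h
              · exact hu (h ▸ List.mem_cons_self)
              · exact hu (List.mem_cons_of_mem _ (hsub u h))
            · intro z hz
              rcases List.mem_cons.mp hz with h | h
              · simp [h]
              · exact List.mem_cons_of_mem _ (hsub z h)

theorem walk_first (p : V → Prop) : ∀ {u : V} {l : List V} {v : V},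
    Walk r u l v → p v →
    ∃ m z, (u :: m) <+: (u :: l) ∧ Walk r u m z ∧ p z ∧
      ∀ y ∈ (u :: m).dropLast, ¬ p y := by
  intro u l
  induction l generalizing u with
  | nil =>
      intro v hw hv
      cases hw
      exact ⟨[], u, List.prefix_refl _, rfl, hv, by simp⟩
  | cons b t ih =>
      intro v hw hv
      by_cases hu : p u
      · exact ⟨[], u, ⟨b :: t, rfl⟩, rfl, hu, by simp⟩
      · obtain ⟨hs, hw'⟩ := hw
        obtain ⟨m, z, hpre, hwm, hz, hdrop⟩ := ih hw' hv
        refine ⟨b :: m, z, ?_, ⟨hs, hwm⟩, hz, ?_⟩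
        · obtain ⟨tt, htt⟩ := hpre
          exact ⟨tt, by simp at htt ⊢; exact htt⟩
        · intro y hy
          have heq : (u :: b :: m).dropLast = u :: (b :: m).dropLast := by simp
          rw [heq] at hy
          rcases List.mem_cons.mp hy with h | h
          · exact h ▸ hu
          · exact hdrop y h

/-- undirected arc relation -/
def und (A : V → V → Prop) (a b : V) : Prop := A a b ∨ A b a

theorem ustep_symm_s13 {S : Set V} : Symmetric (UStep A S) :=
  fun _ _ ⟨h1, h2, h3, h4⟩ => ⟨h2, h1, h3.symm, h4.symm⟩

theorem walk_lift_ustep (hirr : ∀ v : V, ¬ A v v) {S : Set V} :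
    ∀ {u : V} {l : List V} {v : V}, Walk (und A) u l v → u ∈ S → (∀ z ∈ l, z ∈ S) →
      Walk (UStep A S) u l v
  | _, [], _, hw, _, _ => hw
  | u, b :: l, _, ⟨hs, hw⟩, hu, hmem => by
      have hb : b ∈ S := hmem b (List.mem_cons_self)
      have hne : u ≠ b := by rintro rfl; rcases hs with h | h <;> exact hirr _ h
      exact ⟨⟨hu, hb, hne, hs⟩, walk_lift_ustep hirr hw hb
        fun z hz => hmem z (List.mem_cons_of_mem _ hz)⟩

theorem walk_lift_stepin {S : Set V} :
    ∀ {u : V} {l : List V} {v : V}, Walk A u l v → u ∈ S → (∀ z ∈ l, z ∈ S) →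
      Walk (StepIn A S) u l v
  | _, [], _, hw, _, _ => hw
  | u, b :: l, _, ⟨hs, hw⟩, hu, hmem =>
      ⟨⟨hu, hmem b (List.mem_cons_self), hs⟩, walk_lift_stepin hw
        (hmem b (List.mem_cons_self)) fun z hz => hmem z (List.mem_cons_of_mem _ hz)⟩

theorem walk_conn {q : V → V → Prop} (hsym : Symmetric q) {u : V} {l : List V} {v z : V}
    (hw : Walk q u l v) (hz : z ∈ u :: l) : Relation.ReflTransGen q z u := by
  rcases List.mem_cons.mp hz with h | h
  · exact h ▸ Relation.ReflTransGen.refl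
  · obtain ⟨s, t, _, h2, _⟩ := walk_split hw h
    haveI : Std.Symm q := ⟨fun _ _ h => hsym h⟩
    exact Std.Symm.symm _ _ (walk_rtg h2)

theorem walk_concat_split : ∀ {u : V} {s : List V} {z w : V},
    Walk r u (s ++ [z]) w → ∃ y, Walk r u s y ∧ r y w
  | u, [], z, w, ⟨hs, hw⟩ => by cases hw; exact ⟨u, rfl, hs⟩
  | _, c :: s', z, w, ⟨hs, hw⟩ => by
      obtain ⟨y, h1, h2⟩ := walk_concat_split hw
      exact ⟨y, ⟨hs, h1⟩, h2⟩

theorem walk_und_reverse : ∀ {u : V} {κ : List V} {c : V},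
    Walk A u (κ ++ [c]) c → Walk (und A) c (κ.reverse ++ [u]) u
  | u, [], c, ⟨hs, hw⟩ => by cases hw; exact ⟨Or.inr hs, rfl⟩
  | u, k :: κ', c, ⟨hs, hw⟩ => by
      have ih := walk_und_reverse hw
      have : Walk (und A) c ((κ'.reverse ++ [k]) ++ [u]) u :=
        walk_append ih ⟨Or.inr hs, rfl⟩
      simpa using this

theorem walk_reach_last {S : Set V} {u : V} {l : List V} {v z : V}
    (hw : Walk (StepIn A S) u l v) (hz : z ∈ u :: l) :
    Relation.ReflTransGen (StepIn A S) z v := by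
  rcases List.mem_cons.mp hz with h | h
  · exact h ▸ walk_rtg hw
  · obtain ⟨s, t, _, _, h3⟩ := walk_split hw h
    exact walk_rtg h3

theorem mem_list_ncard {L : List V} (hnd : L.Nodup) :
    ({z | z ∈ L} : Set V).ncard = L.length := by
  classical
  have h : ({z | z ∈ L} : Set V) = ↑L.toFinset := by ext z; simp
  rw [h, Set.ncard_coe_finset, List.toFinset_card_of_nodup hnd]

theorem nodup_subset_length {L1 L2 : List V} (h1 : L1.Nodup) (h2 : L2.Nodup)
    (hsub : ∀ z ∈ L1, z ∈ L2) : L1.length ≤ L2.length := by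
  classical
  have := Finset.card_le_card (fun z hz => by
    rw [List.mem_toFinset] at hz ⊢
    exact hsub z hz : L1.toFinset ⊆ L2.toFinset)
  rwa [List.toFinset_card_of_nodup h1, List.toFinset_card_of_nodup h2] at this

end Helpers

theorem cyc_biconn (hirr : ∀ v : V, ¬ A v v) {h : V} {T : List V} {e : V}
    (hw : Walk (und A) h T e) (hnd : (h :: T).Nodup) (hlen : 3 ≤ (h :: T).length)
    (hcl : und A e h) : Biconnected A {z | z ∈ h :: T} := by
  set U : Set V := {z | z ∈ h :: T} with hU
  have hmemU : ∀ z ∈ h :: T, z ∈ U := fun z hz => hz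
  have hconn_of_hub : ∀ (S : Set V) (hub : V), hub ∈ S →
      (∀ z ∈ S, Relation.ReflTransGen (UStep A S) z hub) → UConnected A S := by
    intro S hub hhub hall
    refine ⟨⟨hub, hhub⟩, fun s hs t ht => (hall s hs).trans ?_⟩
    haveI : Std.Symm (UStep A S) := ⟨fun _ _ h => ustep_symm_s13 h⟩
    exact Std.Symm.symm _ _ (hall t ht)
  constructor
  · rw [hU, mem_list_ncard hnd]; exact hlen
  constructor
  · -- UConnected A U
    have wU : Walk (UStep A U) h T e :=
      walk_lift_ustep hirr hw (hmemU h (List.mem_cons_self))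
        (fun z hz => hmemU z (List.mem_cons_of_mem _ hz))
    exact hconn_of_hub U h (hmemU h (List.mem_cons_self))
      (fun z hz => walk_conn ustep_symm_s13 wU hz)
  · -- deletion
    intro v hv
    have hvT : v ∈ h :: T := hv
    have hnotmem : h ∉ T := (List.nodup_cons.mp hnd).1
    have hndT : T.Nodup := (List.nodup_cons.mp hnd).2
    rcases List.mem_cons.mp hvT with rfl | hvT'
    · -- v = h ; remaining = T
      match T, hw, hlen with
      | b :: T₂, ⟨_, hw₂⟩, hlen =>
        have hSeq : U \ {v} = {z | z ∈ b :: T₂} := by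
          ext z
          simp only [hU, Set.mem_diff, Set.mem_setOf_eq, Set.mem_singleton_iff]
          constructor
          · rintro ⟨h1, h2⟩
            rcases List.mem_cons.mp h1 with h3 | h3
            · exact absurd h3 h2
            · exact h3
          · intro hzT
            exact ⟨List.mem_cons_of_mem _ hzT, fun hzv => hnotmem (hzv ▸ hzT)⟩
        rw [hSeq]
        have wS : Walk (UStep A {z | z ∈ b :: T₂}) b T₂ e :=
          walk_lift_ustep hirr hw₂ (List.mem_cons_self)
            (fun z hz => List.mem_cons_of_mem _ hz)
        exact hconn_of_hub _ b (List.mem_cons_self)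
          (fun z hz => walk_conn ustep_symm_s13 wS hz)
    · -- v ∈ T
      obtain ⟨s, t, rfl, hpre0, hpost0⟩ := walk_split hw hvT'
      obtain ⟨y, hpre, _⟩ := walk_concat_split hpre0
      have hndall : ((h :: s) ++ v :: t).Nodup := hnd
      rw [List.nodup_append'] at hndall
      obtain ⟨hnd1, hnd2, hdisj⟩ := hndall
      have hvns : v ∉ h :: s := fun hmem => hdisj hmem (List.mem_cons_self)
      have hvnt : v ∉ t := (List.nodup_cons.mp hnd2).1
      have hTshape : h :: (s ++ v :: t) = (h :: s) ++ v :: t := by simp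
      have hSeq : U \ {v} = {z | z ∈ (h :: s) ++ t} := by
        ext z
        simp only [hU, Set.mem_diff, Set.mem_setOf_eq, Set.mem_singleton_iff]
        constructor
        · intro ⟨h1, h2⟩
          have h1' : z ∈ (h :: s) ++ v :: t := hTshape ▸ h1
          rcases List.mem_append.mp h1' with h3 | h3
          · exact List.mem_append.mpr (Or.inl h3)
          · rcases List.mem_cons.mp h3 with h4 | h4
            · exact absurd h4 h2
            · exact List.mem_append.mpr (Or.inr h4)
        · intro h1
          rcases List.mem_append.mp h1 with h1 | h1
          · refine ⟨?_, fun hzv => hvns (hzv ▸ h1)⟩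
            show z ∈ h :: (s ++ v :: t)
            rw [hTshape]
            exact List.mem_append.mpr (Or.inl h1)
          · refine ⟨?_, fun hzv => hvnt (hzv ▸ h1)⟩
            show z ∈ h :: (s ++ v :: t)
            rw [hTshape]
            exact List.mem_append.mpr (Or.inr (List.mem_cons_of_mem _ h1))
      rw [hSeq]
      set S : Set V := {z | z ∈ (h :: s) ++ t} with hS
      have hmemS_pre : ∀ z ∈ h :: s, z ∈ S := fun z hz =>
        List.mem_append.mpr (Or.inl hz)
      have hmemS_post : ∀ z ∈ t, z ∈ S := fun z hz =>
        List.mem_append.mpr (Or.inr hz)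
      have wpre : Walk (UStep A S) h s y :=
        walk_lift_ustep hirr hpre (hmemS_pre h (List.mem_cons_self))
          (fun z hz => hmemS_pre z (List.mem_cons_of_mem _ hz))
      refine hconn_of_hub S h (hmemS_pre h (List.mem_cons_self)) ?_
      intro z hz
      have hz' : z ∈ (h :: s) ++ t := hz
      rw [List.mem_append] at hz'
      rcases hz' with hz1 | hz1
      · exact walk_conn ustep_symm_s13 wpre hz1
      · -- z ∈ t ; t nonempty
        match t, hpost0, hz1 with
        | b :: t₂, ⟨_, hpost⟩, hz1 =>
          have wpost : Walk (UStep A S) b t₂ e :=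
            walk_lift_ustep hirr hpost (hmemS_post b (List.mem_cons_self))
              (fun w hw' => hmemS_post w (List.mem_cons_of_mem _ hw'))
          have hzb : Relation.ReflTransGen (UStep A S) z b :=
            walk_conn ustep_symm_s13 wpost hz1
          have heb : Relation.ReflTransGen (UStep A S) e b :=
            walk_conn ustep_symm_s13 wpost (walk_last_mem hpost)
          have heS : e ∈ S := hmemS_post e (by
            have := walk_last_mem hpost
            exact this)
          have hhS : h ∈ S := hmemS_pre h (List.mem_cons_self)
          have hne : e ≠ h := by rintro rfl; rcases hcl with hc | hc <;> exact hirr _ hc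
          have hedge : UStep A S e h := ⟨heS, hhS, hne, hcl⟩
          exact hzb.trans ((show Relation.ReflTransGen (UStep A S) b e by
              haveI : Std.Symm (UStep A S) := ⟨fun _ _ h => ustep_symm_s13 h⟩
              exact Std.Symm.symm _ _ heb).trans
            (Relation.ReflTransGen.head hedge Relation.ReflTransGen.refl))

/-- core step of Theorem B.1. -/
theorem stmt13 [Fintype V] (A : V → V → Prop) (hirr : ∀ v : V, ¬ A v v)
    (n : ℕ) (hn : 3 ≤ n)
    (hblocks : ∀ U : Set V, DirectedSubBlock A U → U.ncard ≤ n)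
    (x : ℕ) (hx : n - 2 ≤ x)
    (W : Set V) (hWcard : 2 ≤ W.ncard)
    (hreach : ∃ a ∈ W, ∀ b ∈ W, ReachIn A W b a)
    (i : V) (hiW : i ∈ W) (j : V) (hjW : j ∉ W) (hji : A j i)
    (hcp : CyclePart A {j} (W \ {i}) i x) :
    DynPart A {j} (W \ {i}) {i} := by
  classical
  by_contra hdp
  set r1 : V → V → Prop := StepIn A ({i} : Set V)ᶜ with hr1
  set rW : V → V → Prop := StepIn A W with hrWdef
  -- extract a starting configuration from the failure of DynPart
  rw [DynPart, Set.eq_empty_iff_forall_notMem] at hdp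
  push_neg at hdp
  obtain ⟨u₀, hu₀⟩ := hdp
  obtain ⟨⟨j', hj', hrj⟩, ⟨w₀, hw₀, hrw⟩⟩ := hu₀
  rw [Set.mem_singleton_iff] at hj'
  rw [hj'] at hrj
  obtain ⟨hw₀W, hw₀i⟩ := hw₀
  rw [Set.mem_singleton_iff] at hw₀i
  obtain ⟨hu₀i, hrj'⟩ := hrj
  obtain ⟨_, hrw'⟩ := hrw
  rw [Set.mem_compl_singleton_iff] at hu₀i
  obtain ⟨l₁₀, hl₁₀⟩ := rtg_walk hrj'
  obtain ⟨l₂₀, hl₂₀⟩ := rtg_walk hrw'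
  -- minimization
  set Cfg : ℕ → Prop := fun s => ∃ (u' w' : V) (l1 l2 : List V),
    w' ∈ W ∧ w' ≠ i ∧ u' ≠ i ∧ Walk r1 u' l1 j ∧ Walk r1 u' l2 w' ∧
    l1.length + l2.length = s with hCfgdef
  have hCfg : ∃ s, Cfg s :=
    ⟨_, u₀, w₀, l₁₀, l₂₀, hw₀W, hw₀i, hu₀i, hl₁₀, hl₂₀, rfl⟩
  set smin := Nat.find hCfg with hsmindef
  have hsmin : Cfg smin := Nat.find_spec hCfg
  have hminimal : ∀ s, s < smin → ¬ Cfg s := fun s hs => Nat.find_min hCfg hs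
  -- smin > x by the cycle-partitioning hypothesis
  have hxlt : x < smin := by
    by_contra hle
    push_neg at hle
    obtain ⟨u, w, l1, l2, hwW, hwi, hui, hwl1, hwl2, hsum⟩ := hsmin
    have h1 : u ∈ InSetLe A ({i} : Set V)ᶜ l1.length {j} :=
      ⟨j, Set.mem_singleton _, Set.mem_compl_singleton_iff.mpr hui,
        walk_stepsLe hwl1 le_rfl⟩
    have h2 : u ∈ InSetLe A ({i} : Set V)ᶜ (x - l1.length) (W \ {i}) := by
      refine ⟨w, ⟨hwW, Set.mem_singleton_iff.not.mpr hwi⟩,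
        Set.mem_compl_singleton_iff.mpr hui, walk_stepsLe hwl2 ?_⟩
      omega
    have hx' := hcp l1.length (x - l1.length) (by omega)
    rw [Set.eq_empty_iff_forall_notMem] at hx'
    exact hx' u ⟨h1, h2⟩
  -- take a minimal configuration and deduplicate its two walks
  obtain ⟨u, w, l1raw, l2raw, hwW, hwi, hui, hwl1raw, hwl2raw, hsumraw⟩ := hsmin
  obtain ⟨l1, hwl1, hlen1, hnd1, hsub1⟩ := walk_nodup l1raw.length le_rfl hwl1raw
  obtain ⟨l2, hwl2, hlen2, hnd2, hsub2⟩ := walk_nodup l2raw.length le_rfl hwl2raw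
  have hCfgmin : Cfg (l1.length + l2.length) :=
    ⟨u, w, l1, l2, hwW, hwi, hui, hwl1, hwl2, rfl⟩
  have hsum : l1.length + l2.length = smin := by
    have h1 : ¬ (l1.length + l2.length < smin) := fun h => hminimal _ h hCfgmin
    omega
  -- membership facts
  have hl1i : ∀ z ∈ l1, z ≠ i := fun z hz =>
    Set.mem_compl_singleton_iff.mp (walk_mem_S hwl1 z hz)
  have hl2i : ∀ z ∈ l2, z ≠ i := fun z hz =>
    Set.mem_compl_singleton_iff.mp (walk_mem_S hwl2 z hz)
  -- F1 : tails of the two walks are disjoint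
  have F1 : ∀ z, z ∈ l1 → z ∈ l2 → False := by
    intro z hz1 hz2
    obtain ⟨s1', t1, he1, _, hw1⟩ := walk_split hwl1 hz1
    obtain ⟨s2', t2, he2, _, hw2⟩ := walk_split hwl2 hz2
    refine hminimal (t1.length + t2.length) ?_
      ⟨z, w, t1, t2, hwW, hwi, hl1i z hz1, hw1, hw2, rfl⟩
    have ha1 : l1.length = s1'.length + 1 + t1.length := by rw [he1]; simp; try omega
    have ha2 : l2.length = s2'.length + 1 + t2.length := by rw [he2]; simp; try omega
    omega
  -- F2 : the walk towards j avoids W entirely (after u)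
  have F2 : ∀ z ∈ l1, z ∉ W := by
    intro z hz hzW
    obtain ⟨s1', t1, he1, _, hw1⟩ := walk_split hwl1 hz
    refine hminimal (t1.length + ([] : List V).length) ?_
      ⟨z, z, t1, [], hzW, hl1i z hz, hl1i z hz, hw1, rfl, rfl⟩
    have ha1 : l1.length = s1'.length + 1 + t1.length := by rw [he1]; simp; try omega
    simp only [List.length_nil]
    omega
  -- F3 : if u ∈ W then the second walk is trivial
  have F3 : u ∈ W → l2 = [] ∧ u = w := by
    intro huW
    have hCfg' : Cfg (l1.length + ([] : List V).length) :=
      ⟨u, u, l1, [], huW, hui, hui, hwl1, rfl, rfl⟩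
    have h1 : ¬ (l1.length + ([] : List V).length < smin) :=
      fun h => hminimal _ h hCfg'
    simp only [List.length_nil] at h1
    have hb0 : l2.length = 0 := by omega
    have hl2nil : l2 = [] := List.length_eq_zero_iff.mp hb0
    rw [hl2nil] at hwl2
    exact ⟨hl2nil, show u = w from hwl2⟩
  -- F4 : W-vertices on the second walk must be its endpoint
  have F4 : ∀ z ∈ l2, z ∈ W → z = w := by
    intro z hz hzW
    obtain ⟨s2', t2, he2, hwpre, _⟩ := walk_split hwl2 hz
    have hCfg' : Cfg (l1.length + (s2' ++ [z]).length) :=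
      ⟨u, z, l1, s2' ++ [z], hzW, hl2i z hz, hui, hwl1, hwpre, rfl⟩
    have h1 : ¬ (l1.length + (s2' ++ [z]).length < smin) :=
      fun h => hminimal _ h hCfg'
    have hlen : l2.length = s2'.length + 1 + t2.length := by rw [he2]; simp; try omega
    simp only [List.length_append, List.length_singleton] at h1
    have ht2 : t2 = [] := by
      have : t2.length = 0 := by omega
      exact List.length_eq_zero_iff.mp this
    rw [ht2] at he2
    have hwl2' : Walk r1 u l2 z := by
      rw [he2]
      simpa using hwpre
    exact walk_end_unique hwl2' hwl2
  -- paths inside W towards the common target aW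
  obtain ⟨aW, haW, hallW⟩ := hreach
  obtain ⟨_, hrtg1⟩ := hallW i hiW
  obtain ⟨_, hrtg2⟩ := hallW w hwW
  obtain ⟨q1raw, hq1raw⟩ := rtg_walk hrtg1
  obtain ⟨q2raw, hq2raw⟩ := rtg_walk hrtg2
  obtain ⟨q1, hwq1, _, hndq1, _⟩ := walk_nodup q1raw.length le_rfl hq1raw
  obtain ⟨q2, hwq2, _, hndq2, _⟩ := walk_nodup q2raw.length le_rfl hq2raw
  have hq1W : ∀ z ∈ q1, z ∈ W := walk_mem_S hwq1
  have hq2W : ∀ z ∈ q2, z ∈ W := walk_mem_S hwq2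
  -- first vertex of the w-walk lying on R1 := i :: q1
  have haR1 : aW ∈ i :: q1 := walk_last_mem hwq1
  obtain ⟨m, c, hmpre, hwm, hcR1, hbefore⟩ := walk_first (· ∈ i :: q1) hwq2 haR1
  have hndwm : (w :: m).Nodup := hmpre.sublist.nodup hndq2
  have hmq2 : ∀ z ∈ m, z ∈ q2 := by
    intro z hz
    have hzw : z ∈ w :: q2 := hmpre.subset (List.mem_cons_of_mem _ hz)
    rcases List.mem_cons.mp hzw with h | h
    · exact absurd (h ▸ hz) (List.nodup_cons.mp hndwm).1
    · exact h
  have hmW : ∀ z ∈ m, z ∈ W := fun z hz => hq2W z (hmq2 z hz)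
  have hcW : c ∈ W := by
    rcases List.mem_cons.mp hcR1 with h | h
    · exact h ▸ hiW
    · exact hq1W c h
  -- w on R1 forces m = [] and c = w
  have hwR1 : w ∈ i :: q1 → m = [] ∧ c = w := by
    intro hwmem
    rcases walk_eq_concat hwm with rfl | ⟨μ, hμ⟩
    · exact ⟨rfl, (show w = c from hwm).symm⟩
    · exfalso
      refine hbefore w ?_ hwmem
      have hdl : (w :: m).dropLast = w :: μ := by
        rw [hμ, show w :: (μ ++ [c]) = (w :: μ) ++ [c] by simp,
          List.dropLast_concat]
      rw [hdl]
      exact List.mem_cons_self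
  -- the initial segment of the i-walk ending at c
  obtain ⟨δ, hwδ, hδpre⟩ : ∃ δ, Walk rW i δ c ∧ (i :: δ) <+: (i :: q1) := by
    rcases List.mem_cons.mp hcR1 with h | h
    · exact ⟨[], show Walk rW i [] c from h.symm, ⟨q1, rfl⟩⟩
    · obtain ⟨s', t', he, hwpre, _⟩ := walk_split hwq1 h
      exact ⟨s' ++ [c], hwpre, ⟨t', by rw [he]; simp⟩⟩
  have hndiδ : (i :: δ).Nodup := hδpre.sublist.nodup hndq1
  have hδR1 : ∀ z ∈ i :: δ, z ∈ i :: q1 := fun z hz => hδpre.subset hz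
  have hδW : ∀ z ∈ δ, z ∈ W := walk_mem_S hwδ
  -- full directed walks under the bare arc relation A
  have toA1 : ∀ p q : V, r1 p q → A p q := fun _ _ h => h.2.2
  have toAW : ∀ p q : V, rW p q → A p q := fun _ _ h => h.2.2
  have wX1 : Walk A u (l1 ++ (i :: δ)) c :=
    walk_append (hwl1.imp toA1) ⟨hji, hwδ.imp toAW⟩
  have wX2 : Walk A u (l2 ++ m) c :=
    walk_append (hwl2.imp toA1) (hwm.imp toAW)
  by_cases huc : u = c
  · -- Case B : the path to j closes into a directed cycle through i
    have huW : u ∈ W := huc ▸ hcW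
    obtain ⟨hl2nil, huw⟩ := F3 huW
    have hb0 : l2.length = 0 := by rw [hl2nil]; rfl
    have hδne : δ ≠ [] := by
      rintro rfl
      exact hui (huc.trans (show i = c from hwδ).symm)
    obtain ⟨γ, hγ⟩ := (walk_eq_concat hwδ).resolve_left hδne
    have wX1' : Walk A u ((l1 ++ (i :: γ)) ++ [c]) c := by
      have heq : l1 ++ (i :: δ) = (l1 ++ (i :: γ)) ++ [c] := by rw [hγ]; simp
      rwa [heq] at wX1
    obtain ⟨y, hwy, hyc⟩ := walk_concat_split wX1'
    have hndγ : (i :: γ).Nodup := by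
      have hsl : List.Sublist (i :: γ) (i :: δ) := by
        rw [hγ, show i :: (γ ++ [c]) = (i :: γ) ++ [c] by simp]
        exact List.sublist_append_left _ _
      exact hsl.nodup hndiδ
    have hγW : ∀ z ∈ γ, z ∈ W := fun z hz => hδW z (by rw [hγ]; simp [hz])
    have hγδ : ∀ z ∈ i :: γ, z ∈ i :: δ := by
      intro z hz
      rcases List.mem_cons.mp hz with rfl | h
      · exact List.mem_cons_self
      · exact List.mem_cons_of_mem _ (by rw [hγ]; simp [h])
    have hndC : (u :: (l1 ++ (i :: γ))).Nodup := by
      rw [show u :: (l1 ++ (i :: γ)) = (u :: l1) ++ (i :: γ) by simp,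
        List.nodup_append']
      refine ⟨hnd1, hndγ, ?_⟩
      intro z hz1 hz2
      rcases List.mem_cons.mp hz1 with rfl | hz1'
      · rcases List.mem_cons.mp hz2 with h | h
        · exact hui h
        · have hcγ : c ∉ γ := by
            have hnd' : (γ ++ [c]).Nodup := by
              have hh := (List.nodup_cons.mp hndiδ).2
              rwa [hγ] at hh
            exact fun hc =>
              (List.nodup_append'.mp hnd').2.2 hc (List.mem_singleton_self c)
          exact hcγ (huc ▸ h)
      · rcases List.mem_cons.mp hz2 with rfl | h
        · exact hl1i z hz1' rfl
        · exact F2 z hz1' (hγW z h)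
    have hlenC : n + 1 ≤ (u :: (l1 ++ (i :: γ))).length := by
      have heq : (u :: (l1 ++ (i :: γ))).length = l1.length + γ.length + 2 := by
        simp; omega
      omega
    have hwund : Walk (und A) u (l1 ++ (i :: γ)) y :=
      hwy.imp (fun _ _ h => Or.inl h)
    have hclose : und A y u := Or.inl (huc ▸ hyc)
    have hbic : Biconnected A {z | z ∈ u :: (l1 ++ (i :: γ))} :=
      cyc_biconn hirr hwund hndC (by omega) hclose
    set U : Set V := {z | z ∈ u :: (l1 ++ (i :: γ))} with hUdef
    have hX1subU : ∀ z ∈ u :: (l1 ++ (i :: δ)), z ∈ U := by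
      intro z hz
      show z ∈ u :: (l1 ++ (i :: γ))
      rcases List.mem_cons.mp hz with rfl | hz'
      · exact List.mem_cons_self
      rcases List.mem_append.mp hz' with h | h
      · exact List.mem_cons_of_mem _ (List.mem_append.mpr (Or.inl h))
      · rw [hγ] at h
        rcases List.mem_cons.mp h with rfl | h'
        · exact List.mem_cons_of_mem _
            (List.mem_append.mpr (Or.inr (List.mem_cons_self)))
        rcases List.mem_append.mp h' with h'' | h''
        · exact List.mem_cons_of_mem _
            (List.mem_append.mpr (Or.inr (List.mem_cons_of_mem _ h'')))
        · rw [List.mem_singleton] at h''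
          subst h''
          rw [← huc]
          exact List.mem_cons_self
    have wX1U : Walk (StepIn A U) u (l1 ++ (i :: δ)) c :=
      walk_lift_stepin wX1 (hX1subU u (List.mem_cons_self))
        (fun z hz => hX1subU z (List.mem_cons_of_mem _ hz))
    have hroot : ∃ t ∈ U, ∀ s ∈ U, ReachIn A U s t := by
      refine ⟨u, List.mem_cons_self, ?_⟩
      intro s hs
      have hsX1 : s ∈ u :: (l1 ++ (i :: δ)) := by
        have hsC : s ∈ u :: (l1 ++ (i :: γ)) := hs
        rcases List.mem_cons.mp hsC with rfl | hs'
        · exact List.mem_cons_self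
        rcases List.mem_append.mp hs' with h | h
        · exact List.mem_cons_of_mem _ (List.mem_append.mpr (Or.inl h))
        · exact List.mem_cons_of_mem _ (List.mem_append.mpr (Or.inr (hγδ s h)))
      have hr := walk_reach_last wX1U hsX1
      rw [← huc] at hr
      exact ⟨hs, hr⟩
    have hDSB : DirectedSubBlock A U := ⟨hroot, hbic⟩
    have hcard := hblocks U hDSB
    rw [hUdef, mem_list_ncard hndC] at hcard
    omega
  · -- Case A : two internally disjoint directed paths from u to c
    set K := l2 ++ m with hKdef
    have hKne : K ≠ [] := by
      rintro hK
      rw [hK] at wX2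
      exact huc (show u = c from wX2)
    obtain ⟨κ, hκ⟩ := (walk_eq_concat wX2).resolve_left hKne
    have wX2' : Walk A u (κ ++ [c]) c := by rwa [hκ] at wX2
    have hndK : K.Nodup := by
      rw [hKdef, List.nodup_append']
      refine ⟨(List.nodup_cons.mp hnd2).2, (List.nodup_cons.mp hndwm).2, ?_⟩
      intro z hz1 hz2
      have hzW : z ∈ W := hmW z hz2
      have hzw := F4 z hz1 hzW
      subst hzw
      exact (List.nodup_cons.mp hndwm).1 hz2
    have hndκ : κ.Nodup := by
      have hsl : List.Sublist κ K := by rw [hκ]; exact List.sublist_append_left _ _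
      exact hsl.nodup hndK
    have hcκ : c ∉ κ := by
      have hd := (List.nodup_append'.mp (hκ ▸ hndK)).2.2
      exact fun h => hd h (List.mem_singleton_self c)
    have hκK : ∀ z ∈ κ, z ∈ K := fun z hz => by rw [hκ]; simp [hz]
    -- vertices of K other than c are not on R1 = i :: q1
    have hnotR1 : ∀ z ∈ K, z ≠ c → z ∉ i :: q1 := by
      intro z hzK hzc hzR1
      rcases List.mem_append.mp hzK with hz2 | hzm
      · rcases List.mem_cons.mp hzR1 with rfl | hzq1
        · exact hl2i z hz2 rfl
        · have hzW : z ∈ W := hq1W z hzq1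
          have hzw : z = w := F4 z hz2 hzW
          obtain ⟨hm0, hcw⟩ := hwR1 (hzw ▸ hzR1)
          exact hzc (hzw.trans hcw.symm)
      · rcases walk_eq_concat hwm with rfl | ⟨μ, hμ⟩
        · simp at hzm
        · have hzμ : z ∈ μ := by
            rw [hμ] at hzm
            rcases List.mem_append.mp hzm with h | h
            · exact h
            · exact absurd (List.mem_singleton.mp h) hzc
          refine hbefore z ?_ hzR1
          have hdl : (w :: m).dropLast = w :: μ := by
            rw [hμ, show w :: (μ ++ [c]) = (w :: μ) ++ [c] by simp,
              List.dropLast_concat]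
          rw [hdl]
          exact List.mem_cons_of_mem _ hzμ
    -- u is not in K
    have huK : u ∉ K := by
      intro huK'
      rcases List.mem_append.mp huK' with h | h
      · exact (List.nodup_cons.mp hnd2).1 h
      · have huW : u ∈ W := hmW u h
        obtain ⟨hl2nil, huw⟩ := F3 huW
        rw [← huw] at hndwm
        exact (List.nodup_cons.mp hndwm).1 h
    -- u is not on i :: δ
    have huδ : u ∉ i :: δ := by
      intro h
      rcases List.mem_cons.mp h with rfl | h'
      · exact hui rfl
      · have huW : u ∈ W := hδW u h'
        obtain ⟨hl2nil, huw⟩ := F3 huW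
        obtain ⟨hm0, hcw⟩ := hwR1 (huw ▸ hδR1 u h)
        exact huc (hcw ▸ huw)
    -- the cycle list
    have hciδ : c ∈ i :: δ := walk_last_mem hwδ
    set T1 := l1 ++ (i :: δ) with hT1def
    set C := u :: (T1 ++ κ.reverse) with hCdef
    have hCeq : C = ((u :: l1) ++ (i :: δ)) ++ κ.reverse := by
      simp [hCdef, hT1def]
    have hnd12 : ((u :: l1) ++ (i :: δ)).Nodup := by
      rw [List.nodup_append']
      refine ⟨hnd1, hndiδ, ?_⟩
      intro z hz1 hz2
      rcases List.mem_cons.mp hz1 with rfl | hz1'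
      · exact huδ hz2
      · rcases List.mem_cons.mp hz2 with rfl | h
        · exact hl1i z hz1' rfl
        · exact F2 z hz1' (hδW z h)
    have hndC : C.Nodup := by
      rw [hCeq, List.nodup_append']
      refine ⟨hnd12, List.nodup_reverse.mpr hndκ, ?_⟩
      intro z hz1 hz2
      have hzκ : z ∈ κ := List.mem_reverse.mp hz2
      have hzc : z ≠ c := fun h => hcκ (h ▸ hzκ)
      have hzK : z ∈ K := hκK z hzκ
      have hzR1 := hnotR1 z hzK hzc
      rcases List.mem_append.mp hz1 with h | h
      · rcases List.mem_cons.mp h with rfl | h'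
        · exact huK hzK
        · rcases List.mem_append.mp hzK with h2 | h2
          · exact F1 z h' h2
          · exact F2 z h' (hmW z h2)
      · exact hzR1 (hδR1 z h)
    -- undirected cycle walk
    have wX1und : Walk (und A) u T1 c := wX1.imp (fun _ _ h => Or.inl h)
    obtain ⟨e, hwe, hclose⟩ := walk_concat_split (walk_und_reverse wX2')
    have hwC : Walk (und A) u (T1 ++ κ.reverse) e := walk_append wX1und hwe
    -- cardinality bound
    have hNlen : l1.length + l2.length + 2 ≤ C.length := by
      have hndN : (i :: u :: (l1 ++ l2)).Nodup := by
        refine List.nodup_cons.mpr ⟨?_, List.nodup_cons.mpr ⟨?_, ?_⟩⟩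
        · intro h
          rcases List.mem_cons.mp h with rfl | h'
          · exact hui rfl
          · rcases List.mem_append.mp h' with h2 | h2
            · exact hl1i i h2 rfl
            · exact hl2i i h2 rfl
        · intro h
          rcases List.mem_append.mp h with h2 | h2
          · exact (List.nodup_cons.mp hnd1).1 h2
          · exact (List.nodup_cons.mp hnd2).1 h2
        · rw [List.nodup_append']
          exact ⟨(List.nodup_cons.mp hnd1).2, (List.nodup_cons.mp hnd2).2, F1⟩
      have hsubN : ∀ z ∈ i :: u :: (l1 ++ l2), z ∈ C := by
        intro z hz
        rw [hCeq]
        rcases List.mem_cons.mp hz with rfl | hz'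
        · exact List.mem_append.mpr (Or.inl
            (List.mem_append.mpr (Or.inr (List.mem_cons_self))))
        rcases List.mem_cons.mp hz' with rfl | hz''
        · exact List.mem_append.mpr (Or.inl
            (List.mem_append.mpr (Or.inl (List.mem_cons_self))))
        rcases List.mem_append.mp hz'' with h2 | h2
        · exact List.mem_append.mpr (Or.inl
            (List.mem_append.mpr (Or.inl (List.mem_cons_of_mem _ h2))))
        · -- z ∈ l2 ⊆ K : either z = c (then z ∈ i::δ) or z ∈ κ
          have hzK : z ∈ K := List.mem_append.mpr (Or.inl h2)
          by_cases hzc : z = c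
          · exact List.mem_append.mpr (Or.inl
              (List.mem_append.mpr (Or.inr (hzc ▸ hciδ))))
          · have hzκ : z ∈ κ := by
              rw [hκ] at hzK
              rcases List.mem_append.mp hzK with h | h
              · exact h
              · exact absurd (List.mem_singleton.mp h) hzc
            exact List.mem_append.mpr (Or.inr (List.mem_reverse.mpr hzκ))
      have := nodup_subset_length hndN hndC hsubN
      simp at this; omega
    have hlenC : n + 1 ≤ C.length := by omega
    -- biconnectivity
    have hbic : Biconnected A {z | z ∈ C} :=
      cyc_biconn hirr hwC hndC (by rw [← hCdef]; omega) hclose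
    -- root condition : everything reaches c inside the cycle
    set U : Set V := {z | z ∈ C} with hUdef
    have hX1subU : ∀ z ∈ u :: T1, z ∈ U := by
      intro z hz
      show z ∈ C
      rcases List.mem_cons.mp hz with rfl | hz'
      · exact List.mem_cons_self
      · exact List.mem_cons_of_mem _ (List.mem_append.mpr (Or.inl hz'))
    have hX2subU : ∀ z ∈ u :: K, z ∈ U := by
      intro z hz
      show z ∈ C
      rcases List.mem_cons.mp hz with rfl | hz'
      · exact List.mem_cons_self
      by_cases hzc : z = c
      · subst hzc
        exact List.mem_cons_of_mem _
          (List.mem_append.mpr (Or.inl (List.mem_append.mpr (Or.inr hciδ))))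
      · have hzκ : z ∈ κ := by
          rw [hκ] at hz'
          rcases List.mem_append.mp hz' with h | h
          · exact h
          · exact absurd (List.mem_singleton.mp h) hzc
        exact List.mem_cons_of_mem _
          (List.mem_append.mpr (Or.inr (List.mem_reverse.mpr hzκ)))
    have wX1U : Walk (StepIn A U) u T1 c :=
      walk_lift_stepin wX1 (hX1subU u (List.mem_cons_self))
        (fun z hz => hX1subU z (List.mem_cons_of_mem _ hz))
    have wX2U : Walk (StepIn A U) u K c :=
      walk_lift_stepin wX2 (hX2subU u (List.mem_cons_self))
        (fun z hz => hX2subU z (List.mem_cons_of_mem _ hz))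
    have hcU : c ∈ U := hX1subU c (List.mem_cons_of_mem _
      (List.mem_append.mpr (Or.inr hciδ)))
    have hroot : ∃ t ∈ U, ∀ s ∈ U, ReachIn A U s t := by
      refine ⟨c, hcU, ?_⟩
      intro s hs
      have hsC : s ∈ C := hs
      rcases List.mem_cons.mp hsC with rfl | hs'
      · exact ⟨hs, walk_reach_last wX1U (List.mem_cons_self)⟩
      rcases List.mem_append.mp hs' with h | h
      · exact ⟨hs, walk_reach_last wX1U (List.mem_cons_of_mem _ h)⟩
      · have hsκ : s ∈ κ := List.mem_reverse.mp h
        exact ⟨hs, walk_reach_last wX2U (List.mem_cons_of_mem _ (hκK s hsκ))⟩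
    have hDSB : DirectedSubBlock A U := ⟨hroot, hbic⟩
    have hcard := hblocks U hDSB
    rw [hUdef, mem_list_ncard hndC] at hcard
    omega
end

section
/- (Sub-claim in the proof of Theorem B.1 of the paper.) Let W ⊆ V with |W| ≥ 2 be such that some vertex of W is reachable in D[W] from every other vertex of W, let i ∈ W, let j ∈ V ∖ W with (j, i) ∈ A, and let x ∈ ℕ. If i is cycle-partitioning at order x with respect to {j} and W ∖ {i}, but i is NOT dynamically partitioning with respect to {j} and W ∖ {i}, then there exists U ⊆ V with i, j ∈ U, U ∩ (W ∖ {i}) ≠ ∅, and |U| ≥ x + 3, such that D[U] is a directed sub-block. -/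
open Set

variable {V : Type*}

namespace S14

variable {r : V → V → Prop}

lemma stepsLe_zero {u v : V} : StepsLe r 0 u v ↔ u = v := Iff.rfl

lemma stepsLe_succ_iff {n : ℕ} {u v : V} :
    StepsLe r (n+1) u v ↔ u = v ∨ ∃ w, r u w ∧ StepsLe r n w v := Iff.rfl

lemma stepsLe_succ : ∀ {n u v}, StepsLe r n u v → StepsLe r (n+1) u v := by
  intro n
  induction n with
  | zero => intro u v h; exact Or.inl h
  | succ n ih =>
    intro u v h
    rcases h with h | ⟨w, hw, h⟩
    · exact Or.inl h
    · exact Or.inr ⟨w, hw, ih h⟩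

lemma stepsLe_mono {m n u v} (h : StepsLe r m u v) (hmn : m ≤ n) : StepsLe r n u v := by
  induction n with
  | zero => exact (Nat.le_zero.mp hmn) ▸ h
  | succ n ih =>
    rcases Nat.lt_or_ge m (n+1) with h' | h'
    · exact stepsLe_succ (ih (by omega))
    · have : m = n + 1 := le_antisymm hmn h'
      exact this ▸ h

lemma stepsLe_trans : ∀ {m n u v w}, StepsLe r m u v → StepsLe r n v w → StepsLe r (m+n) u w := by
  intro m
  induction m with
  | zero =>
    intro n u v w h1 h2
    have : u = v := h1
    rw [this]; exact stepsLe_mono h2 (by omega)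
  | succ m ih =>
    intro n u v w h1 h2
    have heq : m + 1 + n = (m + n) + 1 := by omega
    rw [heq]
    rcases h1 with h1 | ⟨z, hz, h1⟩
    · exact stepsLe_mono (h1 ▸ h2) (by omega)
    · exact stepsLe_succ_iff.mpr (Or.inr ⟨z, hz, ih h1 h2⟩)

lemma stepsLe_snoc : ∀ {n u v w}, StepsLe r n u v → r v w → StepsLe r (n+1) u w := by
  intro n
  induction n with
  | zero =>
    intro u v w h hr
    have : u = v := h
    exact stepsLe_succ_iff.mpr (Or.inr ⟨w, this ▸ hr, rfl⟩)
  | succ n ih =>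
    intro u v w h hr
    rcases h with h | ⟨z, hz, h⟩
    · exact stepsLe_succ_iff.mpr (Or.inr ⟨w, h ▸ hr, stepsLe_mono (show StepsLe r 0 w w from rfl) (by omega)⟩)
    · exact stepsLe_succ_iff.mpr (Or.inr ⟨z, hz, ih h hr⟩)

lemma stepsLe_of_reflTransGen {u v} (h : Relation.ReflTransGen r u v) :
    ∃ n, StepsLe r n u v := by
  induction h with
  | refl => exact ⟨0, rfl⟩
  | tail _ hstep ih => obtain ⟨n, hn⟩ := ih; exact ⟨n+1, stepsLe_snoc hn hstep⟩

lemma reflTransGen_of_stepsLe : ∀ {n u v}, StepsLe r n u v → Relation.ReflTransGen r u v := by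
  intro n
  induction n with
  | zero =>
    intro u v h
    have : u = v := h
    exact this ▸ Relation.ReflTransGen.refl
  | succ n ih =>
    intro u v h
    rcases h with h | ⟨w, hw, h⟩
    · exact h ▸ Relation.ReflTransGen.refl
    · exact Relation.ReflTransGen.head hw (ih h)

lemma chain'_of_stepsLe : ∀ {n : ℕ} {u v : V}, StepsLe r n u v →
    ∃ l : List V, List.Chain' r l ∧ l.head? = some u ∧ l.getLast? = some v ∧ l.length ≤ n + 1 := by
  intro n
  induction n with
  | zero =>
    intro u v h
    have : u = v := h
    exact ⟨[u], List.isChain_singleton u, rfl, by simp [this], by simp⟩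
  | succ n ih =>
    intro u v h
    rcases h with h | ⟨w, hw, h⟩
    · exact ⟨[u], List.isChain_singleton u, rfl, by simp [h], by simp⟩
    · obtain ⟨l, hc, hh, hl, hlen⟩ := ih h
      have hne : l ≠ [] := by rintro rfl; simp at hh
      refine ⟨u :: l, ?_, rfl, ?_, by simp; omega⟩
      · refine List.isChain_cons.mpr ⟨fun y hy => ?_, hc⟩
        rw [hh] at hy; simp at hy; exact hy ▸ hw
      · rw [show u :: l = [u] ++ l by rfl, List.getLast?_append, hl]; rfl

lemma stepsLe_of_chain'_cons : ∀ {l : List V} {u v},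
    List.Chain' r (u :: l) → (u :: l).getLast? = some v → StepsLe r l.length u v := by
  intro l
  induction l with
  | nil => intro u v _ hl; simp at hl; exact stepsLe_zero.mpr hl
  | cons b t ih =>
    intro u v hc hl
    rw [show @List.Chain' V = @List.IsChain V from rfl, List.isChain_cons_cons] at hc
    have hl' : (b :: t).getLast? = some v := by
      rwa [List.getLast?_cons_cons] at hl
    exact stepsLe_succ_iff.mpr (Or.inr ⟨b, hc.1, ih hc.2 hl'⟩)

lemma getLast?_suffix {l₁ : List V} {z : V} {l₂ : List V} {b : V}
    (h : (l₁ ++ z :: l₂).getLast? = some b) : (z :: l₂).getLast? = some b := by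
  rcases hgl : (z :: l₂).getLast? with _ | c
  · simp [List.getLast?_eq_none_iff] at hgl
  · rw [List.getLast?_append, hgl] at h; simpa using h

lemma chain'_steps_of_split {l₁ : List V} {z : V} {l₂ : List V} {a : V}
    (hc : List.Chain' r (l₁ ++ z :: l₂)) (ha : (l₁ ++ z :: l₂).head? = some a) :
    StepsLe r l₁.length a z := by
  rcases l₁ with _ | ⟨c, l₁'⟩
  · have : z = a := by simpa using ha
    exact stepsLe_zero.mpr this.symm
  · have hac : c = a := by simpa using ha
    subst hac
    have h1 : List.Chain' r ((c :: l₁') ++ [z]) := (List.isChain_split.mp hc).1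
    have h2 : List.Chain' r (c :: (l₁' ++ [z])) := by simpa using h1
    have h3 : (c :: (l₁' ++ [z])).getLast? = some z := by
      rw [show c :: (l₁' ++ [z]) = (c :: l₁') ++ [z] by simp, List.getLast?_concat]
    have := stepsLe_of_chain'_cons h2 h3
    simpa using this

lemma chain'_steps_to_last {l₁ : List V} {z : V} {l₂ : List V} {b : V}
    (hc : List.Chain' r (l₁ ++ z :: l₂)) (hb : (l₁ ++ z :: l₂).getLast? = some b) :
    StepsLe r l₂.length z b :=
  stepsLe_of_chain'_cons (List.isChain_split.mp hc).2 (getLast?_suffix hb)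

lemma chain'_mem_T {A : V → V → Prop} {T : Set V} : ∀ {l : List V} {a : V},
    List.Chain' (StepIn A T) l → l.head? = some a → a ∈ T → ∀ z ∈ l, z ∈ T := by
  intro l
  induction l with
  | nil => intro a _ _ _ z hz; simp at hz
  | cons c t ih =>
    intro a hc hh ha z hz
    have hac : c = a := by simpa using hh
    subst hac
    rcases List.mem_cons.mp hz with rfl | hz
    · exact ha
    · rcases t with _ | ⟨d, t'⟩
      · simp at hz
      · rw [show @List.Chain' V = @List.IsChain V from rfl, List.isChain_cons_cons] at hc
        exact ih hc.2 rfl hc.1.2.1 z hz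

lemma first_split {P : V → Prop} : ∀ {l : List V}, (∃ z ∈ l, P z) →
    ∃ l₁ z l₂, l = l₁ ++ z :: l₂ ∧ P z ∧ ∀ y ∈ l₁, ¬ P y := by
  intro l
  induction l with
  | nil => rintro ⟨z, hz, _⟩; simp at hz
  | cons c t ih =>
    rintro ⟨z, hz, hP⟩
    by_cases hc : P c
    · exact ⟨[], c, t, rfl, hc, by simp⟩
    · have hzt : z ∈ t := by
        rcases List.mem_cons.mp hz with rfl | h
        · exact absurd hP hc
        · exact h
      obtain ⟨l₁, z', l₂, heq, hPz', hfree⟩ := ih ⟨z, hzt, hP⟩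
      refine ⟨c :: l₁, z', l₂, by rw [heq]; rfl, hPz', ?_⟩
      intro y hy
      rcases List.mem_cons.mp hy with rfl | hy
      · exact hc
      · exact hfree y hy

lemma not_nodup_split : ∀ {l : List V}, ¬ l.Nodup →
    ∃ z l₁ l₂ l₃, l = l₁ ++ z :: (l₂ ++ z :: l₃) := by
  intro l
  induction l with
  | nil => intro h; exact absurd List.nodup_nil h
  | cons c t ih =>
    intro h
    by_cases hct : c ∈ t
    · obtain ⟨s, t', rfl⟩ := List.append_of_mem hct
      exact ⟨c, [], s, t', rfl⟩
    · have : ¬ t.Nodup := fun hn => h (List.nodup_cons.mpr ⟨hct, hn⟩)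
      obtain ⟨z, l₁, l₂, l₃, rfl⟩ := ih this
      exact ⟨z, c :: l₁, l₂, l₃, rfl⟩

lemma exists_nodup_chain'_aux : ∀ (n : ℕ) (l : List V) (u b : V), l.length ≤ n →
    List.Chain' r l → l.head? = some u → l.getLast? = some b →
    ∃ l', List.Chain' r l' ∧ l'.head? = some u ∧ l'.getLast? = some b ∧ l'.Nodup ∧
      ∀ z ∈ l', z ∈ l := by
  intro n
  induction n with
  | zero =>
    intro l u b hlen _ hh _
    rcases l with _ | _
    · simp at hh
    · simp at hlen
  | succ n ih =>
    intro l u b hlen hc hh hb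
    rcases l with _ | ⟨c, t⟩
    · simp at hh
    have huc : c = u := by simpa using hh
    subst huc
    by_cases hu : c ∈ t
    · obtain ⟨t₁, t₂, rfl⟩ := List.append_of_mem hu
      have hassoc : c :: (t₁ ++ c :: t₂) = (c :: t₁) ++ c :: t₂ := by simp
      have hcsplit : List.Chain' r (c :: t₂) := by
        rw [hassoc] at hc
        exact (List.isChain_split.mp hc).2
      have hbsplit : (c :: t₂).getLast? = some b := by
        rw [hassoc] at hb
        exact getLast?_suffix hb
      have hlen' : (c :: t₂).length ≤ n := by
        simp at hlen ⊢; omega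
      obtain ⟨l', h1, h2, h3, h4, h5⟩ := ih (c :: t₂) c b hlen' hcsplit rfl hbsplit
      refine ⟨l', h1, h2, h3, h4, fun z hz => ?_⟩
      rcases List.mem_cons.mp (h5 z hz) with rfl | h
      · exact List.mem_cons_self
      · exact List.mem_cons_of_mem _ (List.mem_append_right _ (List.mem_cons_of_mem _ h))
    · rcases t with _ | ⟨d, t'⟩
      · refine ⟨[c], List.isChain_singleton c, rfl, ?_, by simp, by simp⟩
        simpa using hb
      · have hct : List.Chain' r (d :: t') := hc.tail
        have hbt : (d :: t').getLast? = some b := by rwa [List.getLast?_cons_cons] at hb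
        have hlen' : (d :: t').length ≤ n := by simp at hlen ⊢; omega
        obtain ⟨l', h1, h2, h3, h4, h5⟩ := ih (d :: t') d b hlen' hct rfl hbt
        have hne : l' ≠ [] := by rintro rfl; simp at h2
        have hruc : r c d := (List.isChain_cons_cons.mp hc).1
        refine ⟨c :: l', ?_, rfl, ?_, ?_, ?_⟩
        · refine List.isChain_cons.mpr ⟨fun y hy => ?_, h1⟩
          rw [h2] at hy; simp at hy; exact hy ▸ hruc
        · rw [show c :: l' = [c] ++ l' by rfl, List.getLast?_append, h3]; rfl
        · exact List.nodup_cons.mpr ⟨fun hmem => hu (h5 c hmem), h4⟩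
        · intro z hz
          rcases List.mem_cons.mp hz with rfl | hz
          · exact List.mem_cons_self
          · exact List.mem_cons_of_mem _ (h5 z hz)

lemma exists_nodup_chain' {l : List V} {u b : V}
    (hc : List.Chain' r l) (hh : l.head? = some u) (hb : l.getLast? = some b) :
    ∃ l', List.Chain' r l' ∧ l'.head? = some u ∧ l'.getLast? = some b ∧ l'.Nodup ∧
      ∀ z ∈ l', z ∈ l :=
  exists_nodup_chain'_aux l.length l u b le_rfl hc hh hb

lemma chain'_mono_mem {r' : V → V → Prop} : ∀ {l : List V}, List.Chain' r l →
    (∀ x ∈ l, ∀ y ∈ l, r x y → r' x y) → List.Chain' r' l := by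
  intro l
  induction l with
  | nil => intro _ _; exact List.isChain_nil
  | cons c t ih =>
    intro hc him
    rcases t with _ | ⟨d, t'⟩
    · exact List.isChain_singleton c
    · rw [show @List.Chain' V = @List.IsChain V from rfl, List.isChain_cons_cons] at hc ⊢
      refine ⟨him c (by simp) d (by simp) hc.1, ih hc.2 fun x hx y hy hr => ?_⟩
      exact him x (List.mem_cons_of_mem _ hx) y (List.mem_cons_of_mem _ hy) hr

lemma chain'_ne_of_nodup : ∀ {l : List V}, List.Chain' r l → l.Nodup →
    List.Chain' (fun x y => r x y ∧ x ≠ y) l := by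
  intro l
  induction l with
  | nil => intro _ _; exact List.isChain_nil
  | cons c t ih =>
    intro hc hn
    rcases t with _ | ⟨d, t'⟩
    · exact List.isChain_singleton c
    · rw [show @List.Chain' V = @List.IsChain V from rfl, List.isChain_cons_cons] at hc ⊢
      rw [List.nodup_cons] at hn
      exact ⟨⟨hc.1, fun h => hn.1 (h ▸ List.mem_cons_self)⟩, ih hc.2 hn.2⟩

lemma reflTransGen_last {l : List V} {b : V}
    (hc : List.Chain' r l) (hb : l.getLast? = some b) : ∀ v ∈ l, Relation.ReflTransGen r v b := by
  intro v hv
  obtain ⟨l₁, l₂, rfl⟩ := List.append_of_mem hv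
  exact reflTransGen_of_stepsLe (chain'_steps_to_last hc hb)

lemma rtg_head : ∀ {l : List V} {a : V},
    List.Chain' r l → l.head? = some a → ∀ b ∈ l, Relation.ReflTransGen r a b := by
  intro l
  induction l with
  | nil => intro a _ _ b hb; simp at hb
  | cons c t ih =>
    intro a hc hh b hb
    have hac : c = a := by simpa using hh
    subst hac
    rcases List.mem_cons.mp hb with rfl | hb
    · exact Relation.ReflTransGen.refl
    · rcases t with _ | ⟨d, t'⟩
      · simp at hb
      · rw [show @List.Chain' V = @List.IsChain V from rfl, List.isChain_cons_cons] at hc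
        exact Relation.ReflTransGen.head hc.1 (ih hc.2 rfl b hb)

lemma chain'_connected (hsym : ∀ x y, r x y → r y x) {l : List V}
    (hc : List.Chain' r l) : ∀ a ∈ l, ∀ b ∈ l, Relation.ReflTransGen r a b := by
  intro a ha b hb
  rcases l with _ | ⟨c, t⟩
  · simp at ha
  · have h1 := rtg_head hc rfl a ha
    have h2 := rtg_head hc rfl b hb
    exact Relation.ReflTransGen.trans
      (by haveI : Std.Symm r := ⟨fun x y h => hsym x y h⟩; exact Std.Symm.symm _ _ h1) h2

lemma mem_getLast? {l : List V} {a : V} (h : l.getLast? = some a) : a ∈ l := by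
  have : a ∈ l.reverse.head? := by rw [List.head?_reverse]; exact h ▸ rfl
  exact List.mem_reverse.mp (List.mem_of_mem_head? this)

lemma mem_head? {l : List V} {a : V} (h : l.head? = some a) : a ∈ l :=
  List.mem_of_mem_head? (h ▸ rfl)

lemma dropLast_eq_of_getLast? {l : List V} {z : V} (h : l.getLast? = some z) :
    l.dropLast ++ [z] = l := by
  have hne : l ≠ [] := by rintro rfl; simp at h
  have h2 : l.getLast hne = z := by
    have h3 := List.getLast?_eq_getLast hne
    rw [h3] at h; exact Option.some.inj h
  rw [← h2]; exact List.dropLast_append_getLast hne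

lemma mem_dropLast_iff_of_nodup {l : List V} {z : V}
    (hn : l.Nodup) (hz : l.getLast? = some z) {y : V} :
    y ∈ l.dropLast ↔ y ∈ l ∧ y ≠ z := by
  have heq : l.dropLast ++ [z] = l := dropLast_eq_of_getLast? hz
  have hnd : (l.dropLast ++ [z]).Nodup := by rw [heq]; exact hn
  rw [List.nodup_append'] at hnd
  constructor
  · intro hy
    refine ⟨by rw [← heq]; exact List.mem_append_left _ hy, fun h => hnd.2.2 hy (by simp [h])⟩
  · rintro ⟨hy, hne⟩
    rw [← heq] at hy
    rcases List.mem_append.mp hy with h | h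
    · exact h
    · simp at h; exact absurd h hne

lemma reverse_dropLast_append {l : List V} {h : V} (hh : l.head? = some h) :
    l.reverse.dropLast ++ [h] = l.reverse := by
  rcases l with _ | ⟨c, t⟩
  · simp at hh
  · have : c = h := by simpa using hh
    subst this
    simp [List.dropLast_concat]

def MyChain (r : V → V → Prop) (x : V) (l : List V) (y : V) : Prop :=
  List.Chain' r (l ++ [y]) ∧ (l ++ [y]).head? = some x

lemma MyChain.append {x y z : V} {l₁ l₂ : List V}
    (h₁ : MyChain r x l₁ y) (h₂ : MyChain r y l₂ z) : MyChain r x ((l₁ ++ l₂)) z := by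
  obtain ⟨hc₁, hh₁⟩ := h₁
  obtain ⟨hc₂, hh₂⟩ := h₂
  constructor
  · rw [List.append_assoc]
    rw [show @List.Chain' V = @List.IsChain V from rfl, List.isChain_append]
    refine ⟨(List.isChain_append.mp hc₁).1, hc₂, ?_⟩
    intro p hp q hq
    have hj := (List.isChain_append.mp hc₁).2.2 p hp
    rw [hh₂] at hq
    simp at hq
    subst hq
    exact hj y (by simp)
  · rcases l₁ with _ | ⟨c, t⟩
    · have : y = x := by simpa using hh₁
      subst this
      simpa using hh₂
    · have : c = x := by simpa using hh₁
      subst this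
      simp

end S14

/-- sub-claim in the proof of Theorem B.1. -/
theorem stmt14 [Fintype V] (A : V → V → Prop) (hirr : ∀ v : V, ¬ A v v)
    (W : Set V) (hWcard : 2 ≤ W.ncard)
    (hreach : ∃ a ∈ W, ∀ b ∈ W, ReachIn A W b a)
    (i : V) (hiW : i ∈ W) (j : V) (hjW : j ∉ W) (hji : A j i) (x : ℕ)
    (hcp : CyclePart A {j} (W \ {i}) i x)
    (hnd : ¬ DynPart A {j} (W \ {i}) {i}) :
    ∃ U : Set V, i ∈ U ∧ j ∈ U ∧ (U ∩ (W \ {i})).Nonempty ∧ x + 3 ≤ U.ncard ∧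
      DirectedSubBlock A U := by
  classical
  have hij : i ≠ j := fun h => hjW (h ▸ hiW)
  have hjT : j ∈ ({i}ᶜ : Set V) := by simpa using hij.symm
  -- extract witness from non-dynamic-partitioning
  rw [DynPart, ← Ne, ← Set.nonempty_iff_ne_empty] at hnd
  obtain ⟨u₀, hu₀j, hu₀W⟩ := hnd
  obtain ⟨j', hj', hru₀j⟩ := hu₀j
  rw [Set.mem_singleton_iff] at hj'
  have hj'' := hj'.symm
  subst hj''
  obtain ⟨w₀, hw₀, hru₀w⟩ := hu₀W
  obtain ⟨p₀, hp₀⟩ := S14.stepsLe_of_reflTransGen hru₀j.2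
  obtain ⟨q₀, hq₀⟩ := S14.stepsLe_of_reflTransGen hru₀w.2
  set r : V → V → Prop := StepIn A ({i}ᶜ : Set V) with hrdef
  -- minimize the sum of distances
  have hex : ∃ n : ℕ, ∃ v : V, ∃ p q : ℕ, p + q = n ∧ v ∈ ({i}ᶜ : Set V) ∧
      StepsLe r p v j ∧ ∃ w' ∈ W \ {i}, StepsLe r q v w' :=
    ⟨p₀ + q₀, u₀, p₀, q₀, rfl, hru₀j.1, hp₀, w₀, hw₀, hq₀⟩
  set n₀ := Nat.find hex with hn₀
  obtain ⟨u, p', q', hsum', huT, hpu', w, hwWi, hqu'⟩ := Nat.find_spec hex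
  have hmin : ∀ (v : V) (p q : ℕ), v ∈ ({i}ᶜ : Set V) → StepsLe r p v j →
      (∃ w' ∈ W \ {i}, StepsLe r q v w') → n₀ ≤ p + q :=
    fun v p q h1 h2 h3 => Nat.find_min' hex ⟨v, p, q, rfl, h1, h2, h3⟩
  have hwW : w ∈ W := hwWi.1
  have hwi : w ≠ i := by simpa using hwWi.2
  -- extract the two minimal paths
  obtain ⟨LP0, hcP, hheadP, hlastP, hlenP⟩ := S14.chain'_of_stepsLe hpu'
  rcases LP0 with _ | ⟨u1, LPt⟩
  · simp at hheadP
  have hu1 : u = u1 := (show u1 = u by simpa using hheadP).symm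
  subst hu1
  obtain ⟨LQ0, hcQ, hheadQ, hlastQ, hlenQ⟩ := S14.chain'_of_stepsLe hqu'
  rcases LQ0 with _ | ⟨u2, LQt⟩
  · simp at hheadQ
  have hu2 : u = u2 := (show u2 = u by simpa using hheadQ).symm
  subst hu2
  set p := LPt.length with hpdef
  set q := LQt.length with hqdef
  have hpstep : StepsLe r p u j := S14.stepsLe_of_chain'_cons hcP hlastP
  have hqstep : StepsLe r q u w := S14.stepsLe_of_chain'_cons hcQ hlastQ
  have hle1 : n₀ ≤ p + q := hmin u p q huT hpstep ⟨w, hwWi, hqstep⟩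
  have hpq : p + q = n₀ := by
    simp only [List.length_cons] at hlenP hlenQ
    omega
  -- membership of paths in {i}ᶜ
  have hPT : ∀ z ∈ u :: LPt, z ∈ ({i}ᶜ : Set V) := S14.chain'_mem_T hcP hheadP huT
  have hQT : ∀ z ∈ u :: LQt, z ∈ ({i}ᶜ : Set V) := S14.chain'_mem_T hcQ hheadQ huT
  -- splitting facts
  have hsplitP : ∀ z ∈ (u :: LPt), ∃ l₁ l₂ : List V, u :: LPt = l₁ ++ z :: l₂ ∧
      StepsLe r l₁.length u z ∧ StepsLe r l₂.length z j ∧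
      l₁.length + l₂.length + 1 = p + 1 := by
    intro z hz
    obtain ⟨l₁, l₂, heq⟩ := List.append_of_mem hz
    refine ⟨l₁, l₂, heq, ?_, ?_, ?_⟩
    · exact S14.chain'_steps_of_split (heq ▸ hcP) (heq ▸ hheadP)
    · exact S14.chain'_steps_to_last (heq ▸ hcP) (heq ▸ hlastP)
    · have := congrArg List.length heq
      simp at this
      omega
  have hsplitQ : ∀ z ∈ (u :: LQt), ∃ l₁ l₂ : List V, u :: LQt = l₁ ++ z :: l₂ ∧
      StepsLe r l₁.length u z ∧ StepsLe r l₂.length z w ∧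
      l₁.length + l₂.length + 1 = q + 1 := by
    intro z hz
    obtain ⟨l₁, l₂, heq⟩ := List.append_of_mem hz
    refine ⟨l₁, l₂, heq, ?_, ?_, ?_⟩
    · exact S14.chain'_steps_of_split (heq ▸ hcQ) (heq ▸ hheadQ)
    · exact S14.chain'_steps_to_last (heq ▸ hcQ) (heq ▸ hlastQ)
    · have := congrArg List.length heq
      simp at this
      omega
  -- nodup of the two minimal paths
  have hPnd : (u :: LPt).Nodup := by
    by_contra hnd'
    obtain ⟨z, l₁, l₂, l₃, heq⟩ := S14.not_nodup_split hnd'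
    have h1 : StepsLe r l₁.length u z :=
      S14.chain'_steps_of_split (heq ▸ hcP) (heq ▸ hheadP)
    have heq2 : u :: LPt = (l₁ ++ z :: l₂) ++ z :: l₃ := by rw [heq]; simp
    have h2 : StepsLe r l₃.length z j :=
      S14.chain'_steps_to_last (heq2 ▸ hcP) (heq2 ▸ hlastP)
    have h3 : StepsLe r (l₁.length + l₃.length) u j := S14.stepsLe_trans h1 h2
    have hlen : l₁.length + l₂.length + l₃.length + 2 = p + 1 := by
      have := congrArg List.length heq
      simp at this
      omega
    have := hmin u (l₁.length + l₃.length) q huT h3 ⟨w, hwWi, hqstep⟩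
    omega
  have hQnd : (u :: LQt).Nodup := by
    by_contra hnd'
    obtain ⟨z, l₁, l₂, l₃, heq⟩ := S14.not_nodup_split hnd'
    have h1 : StepsLe r l₁.length u z :=
      S14.chain'_steps_of_split (heq ▸ hcQ) (heq ▸ hheadQ)
    have heq2 : u :: LQt = (l₁ ++ z :: l₂) ++ z :: l₃ := by rw [heq]; simp
    have h2 : StepsLe r l₃.length z w :=
      S14.chain'_steps_to_last (heq2 ▸ hcQ) (heq2 ▸ hlastQ)
    have h3 : StepsLe r (l₁.length + l₃.length) u w := S14.stepsLe_trans h1 h2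
    have hlen : l₁.length + l₂.length + l₃.length + 2 = q + 1 := by
      have := congrArg List.length heq
      simp at this
      omega
    have := hmin u p (l₁.length + l₃.length) huT hpstep ⟨w, hwWi, h3⟩
    omega
  -- key structural facts about the minimal paths
  have hPW : ∀ z ∈ u :: LPt, z ∈ W → z = u ∧ w = u := by
    intro z hz hzW
    obtain ⟨l₁, l₂, heq, h1, h2, hlen⟩ := hsplitP z hz
    have hzT := hPT z hz
    have hzWi : z ∈ W \ {i} := ⟨hzW, by simpa using hzT⟩
    have := hmin z l₂.length 0 hzT h2 ⟨z, hzWi, S14.stepsLe_zero.mpr rfl⟩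
    have hl₁ : l₁.length = 0 := by omega
    have hq0 : LQt.length = 0 := by omega
    have hl₁nil : l₁ = [] := List.length_eq_zero_iff.mp hl₁
    subst hl₁nil
    have hzu : z = u := by
      have := congrArg List.head? heq
      simpa using this.symm
    have hLQnil : LQt = [] := List.length_eq_zero_iff.mp hq0
    rw [hLQnil] at hlastQ
    have huw : u = w := by simpa using hlastQ
    exact ⟨hzu, huw.symm⟩
  have hQW : ∀ z ∈ u :: LQt, z ∈ W → z = w := by
    intro z hz hzW
    obtain ⟨l₁, l₂, heq, h1, h2, hlen⟩ := hsplitQ z hz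
    have hzT := hQT z hz
    have hzWi : z ∈ W \ {i} := ⟨hzW, by simpa using hzT⟩
    have := hmin u p l₁.length huT hpstep ⟨z, hzWi, h1⟩
    have hl₂ : l₂.length = 0 := by omega
    have hl₂nil : l₂ = [] := List.length_eq_zero_iff.mp hl₂
    subst hl₂nil
    have : (u :: LQt).getLast? = some z := by
      rw [heq, List.getLast?_append]
      simp
    rw [hlastQ] at this
    exact (Option.some.inj this).symm
  have hPQ : ∀ z, z ∈ u :: LPt → z ∈ u :: LQt → z = u := by
    intro z hzP hzQ
    obtain ⟨l₁, l₂, heq, h1, h2, hlen⟩ := hsplitP z hzP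
    obtain ⟨m₁, m₂, heq', h1', h2', hlen'⟩ := hsplitQ z hzQ
    have := hmin z l₂.length m₂.length (hPT z hzP) h2 ⟨w, hwWi, h2'⟩
    have hl₁ : l₁.length = 0 := by omega
    have hl₁nil : l₁ = [] := List.length_eq_zero_iff.mp hl₁
    subst hl₁nil
    have := congrArg List.head? heq
    simpa using this.symm
  have hjQ : j ∈ u :: LQt → j = u := by
    intro hz
    obtain ⟨l₁, l₂, heq, h1, h2, hlen⟩ := hsplitQ j hz
    have := hmin j 0 l₂.length hjT (S14.stepsLe_zero.mpr rfl) ⟨w, hwWi, h2⟩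
    have hl₁ : l₁.length = 0 := by omega
    have hl₁nil : l₁ = [] := List.length_eq_zero_iff.mp hl₁
    subst hl₁nil
    have := congrArg List.head? heq
    simpa using this.symm
  -- the order bound
  have hxn : x + 1 ≤ n₀ := by
    by_contra hcon
    push_neg at hcon
    have hpx : p ≤ x := by omega
    have h1 : u ∈ InSetLe A ({i}ᶜ : Set V) p {j} :=
      ⟨j, Set.mem_singleton j, huT, hpstep⟩
    have h2 : u ∈ InSetLe A ({i}ᶜ : Set V) (x - p) (W \ {i}) :=
      ⟨w, hwWi, huT, S14.stepsLe_mono hqstep (by omega)⟩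
    have := hcp p (x - p) (by omega)
    exact (Set.eq_empty_iff_forall_notMem.mp this) u ⟨h1, h2⟩
  -- paths inside W to the common target a
  obtain ⟨a, haW, hreachall⟩ := hreach
  obtain ⟨nS, hnS⟩ := S14.stepsLe_of_reflTransGen (hreachall i hiW).2
  obtain ⟨LS0, hcS0, hhS0, hlS0, -⟩ := S14.chain'_of_stepsLe hnS
  obtain ⟨LS, hcS, hheadS, hlastS, hSnd, -⟩ := S14.exists_nodup_chain' hcS0 hhS0 hlS0
  obtain ⟨nR, hnR⟩ := S14.stepsLe_of_reflTransGen (hreachall w hwW).2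
  obtain ⟨LR0, hcR0, hhR0, hlR0, -⟩ := S14.chain'_of_stepsLe hnR
  obtain ⟨LR, hcR, hheadR, hlastR, hRnd, -⟩ := S14.exists_nodup_chain' hcR0 hhR0 hlR0
  have hSW : ∀ z ∈ LS, z ∈ W := S14.chain'_mem_T hcS hheadS hiW
  have hRW : ∀ z ∈ LR, z ∈ W := S14.chain'_mem_T hcR hheadR hwW
  -- the meeting point m
  have hmem : ∃ z ∈ LR, z ∈ LS := ⟨a, S14.mem_getLast? hlastR, S14.mem_getLast? hlastS⟩
  obtain ⟨R₁, m, R₂, hReq, hmLS, hR₁f⟩ := S14.first_split hmem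
  obtain ⟨S₁, m', S₂, hSeq, hm', hS₁f⟩ :=
    S14.first_split (⟨m, hmLS, rfl⟩ : ∃ z ∈ LS, z = m)
  subst hm'
  have hmW : m' ∈ W := hSW m' hmLS
  have hS₁LS : ∀ z ∈ S₁, z ∈ LS := fun z hz => by rw [hSeq]; exact List.mem_append_left _ hz
  have hR₁LR : ∀ z ∈ R₁, z ∈ LR := fun z hz => by rw [hReq]; exact List.mem_append_left _ hz
  have hwR₁head : R₁ ≠ [] → R₁.head? = some w := by
    intro hne
    rw [hReq, List.head?_append_of_ne_nil _ hne] at hheadR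
    exact hheadR
  have hwLS : w ∈ LS → m' = w := by
    intro hwls
    rcases em (R₁ = []) with hr | hr
    · rw [hr] at hReq
      rw [hReq] at hheadR
      simpa using hheadR
    · exact absurd hwls (hR₁f w (S14.mem_head? (hwR₁head hr)))
  have hR₁ne : m' ≠ w → R₁ ≠ [] := by
    intro hmw hr
    rw [hr] at hReq
    rw [hReq] at hheadR
    exact hmw (by simpa using hheadR)
  -- segments
  set XS : List V := S₁ ++ [m'] with hXSdef
  set XR : List V := R₁ ++ [m'] with hXRdef
  set seg2 : List V := XR.reverse.dropLast with hseg2def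
  set seg3 : List V := (u :: LQt).reverse.dropLast with hseg3def
  set LP' : List V := (u :: LPt).dropLast with hLP'def
  have hLSeq : LS = XS ++ S₂ := by rw [hSeq, hXSdef]; simp
  have hLReq : LR = XR ++ R₂ := by rw [hReq, hXRdef]; simp
  have hcXS : List.Chain' (StepIn A W) XS := by
    rw [hLSeq] at hcS; exact (List.isChain_append.mp hcS).1
  have hcXR : List.Chain' (StepIn A W) XR := by
    rw [hLReq] at hcR; exact (List.isChain_append.mp hcR).1
  have hXSnd : XS.Nodup := ((List.nodup_append'.mp (hLSeq ▸ hSnd)).1)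
  have hXRnd : XR.Nodup := ((List.nodup_append'.mp (hLReq ▸ hRnd)).1)
  have hXSW : ∀ z ∈ XS, z ∈ W := fun z hz => hSW z (hLSeq ▸ List.mem_append_left _ hz)
  have hXRW : ∀ z ∈ XR, z ∈ W := fun z hz => hRW z (hLReq ▸ List.mem_append_left _ hz)
  have hheadXS : XS.head? = some i := by
    rcases em (S₁ = []) with hs | hs
    · rw [hs] at hSeq
      rw [hSeq] at hheadS
      have hmi : m' = i := by simpa using hheadS
      rw [hXSdef, hs]
      simp [hmi]
    · rw [hXSdef, List.head?_append_of_ne_nil _ hs]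
      rw [hSeq, List.head?_append_of_ne_nil _ hs] at hheadS
      exact hheadS
  have hlastXS : XS.getLast? = some m' := by rw [hXSdef]; exact List.getLast?_concat
  have hlastXR : XR.getLast? = some m' := by rw [hXRdef]; exact List.getLast?_concat
  have hheadXR : R₁ ≠ [] → XR.head? = some w := by
    intro hne
    rw [hXRdef, List.head?_append_of_ne_nil _ hne]
    exact hwR₁head hne
  have hm'XR : m' ∈ XR := S14.mem_getLast? hlastXR
  -- the cycle list
  set Cl : List V := S₁ ++ (seg2 ++ (seg3 ++ LP')) with hCldef
  set C : List V := Cl ++ [j] with hCdef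
  have hLP'eq : LP' ++ [j] = u :: LPt := S14.dropLast_eq_of_getLast? hlastP
  have hCeq : C = S₁ ++ (seg2 ++ (seg3 ++ (u :: LPt))) := by
    rw [hCdef, hCldef, ← hLP'eq]
    simp [List.append_assoc]
  set U : Set V := {z : V | z ∈ C} with hUdef
  -- membership characterizations
  have hseg3iff : ∀ y : V, y ∈ seg3 ↔ y ∈ u :: LQt ∧ y ≠ u := by
    intro y
    have h1 : (u :: LQt).reverse.Nodup := List.nodup_reverse.mpr hQnd
    have h2 : (u :: LQt).reverse.getLast? = some u := by
      rw [List.getLast?_reverse]; exact hheadQ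
    rw [hseg3def, S14.mem_dropLast_iff_of_nodup h1 h2, List.mem_reverse]
  have hseg2sub : ∀ y ∈ seg2, y ∈ XR := fun y hy =>
    List.mem_reverse.mp ((List.dropLast_sublist _).mem hy)
  have hwseg2 : w ∉ seg2 := by
    intro hw
    rcases em (R₁ = []) with hr | hr
    · rw [hseg2def, hXRdef, hr] at hw
      simp at hw
    · have h1 : XR.reverse.Nodup := List.nodup_reverse.mpr hXRnd
      have h2 : XR.reverse.getLast? = some w := by
        rw [List.getLast?_reverse]; exact hheadXR hr
      rw [hseg2def, S14.mem_dropLast_iff_of_nodup h1 h2] at hw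
      exact hw.2 rfl
  have hmseg2 : m' ≠ w → m' ∈ seg2 := by
    intro hmw
    have hr := hR₁ne hmw
    have h1 : XR.reverse.Nodup := List.nodup_reverse.mpr hXRnd
    have h2 : XR.reverse.getLast? = some w := by
      rw [List.getLast?_reverse]; exact hheadXR hr
    rw [hseg2def, S14.mem_dropLast_iff_of_nodup h1 h2]
    exact ⟨List.mem_reverse.mpr hm'XR, hmw⟩
  have hwC : w ∈ C := by
    rw [hCeq]
    rcases em (w = u) with hwu | hwu
    · exact List.mem_append_right _ (List.mem_append_right _ (List.mem_append_right _
        (hwu ▸ List.mem_cons_self)))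
    · have : w ∈ seg3 := (hseg3iff w).mpr ⟨S14.mem_getLast? hlastQ, hwu⟩
      exact List.mem_append_right _ (List.mem_append_right _ (List.mem_append_left _ this))
  have hmC : m' ∈ C := by
    rcases em (m' = w) with hmw | hmw
    · exact hmw ▸ hwC
    · rw [hCeq]
      exact List.mem_append_right _ (List.mem_append_left _ (hmseg2 hmw))
  have hXRsubC : ∀ z ∈ XR, z ∈ C := by
    intro z hz
    rcases em (z = w) with hzw | hzw
    · exact hzw ▸ hwC
    rcases em (z = m') with hzm | hzm
    · exact hzm ▸ hmC
    have hr : R₁ ≠ [] := by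
      intro hr
      rw [hXRdef, hr] at hz
      simp at hz
      exact hzm hz
    have h1 : XR.reverse.Nodup := List.nodup_reverse.mpr hXRnd
    have h2 : XR.reverse.getLast? = some w := by
      rw [List.getLast?_reverse]; exact hheadXR hr
    have : z ∈ seg2 := by
      rw [hseg2def, S14.mem_dropLast_iff_of_nodup h1 h2]
      exact ⟨List.mem_reverse.mpr hz, hzw⟩
    rw [hCeq]
    exact List.mem_append_right _ (List.mem_append_left _ this)
  have hLPsubC : ∀ z ∈ u :: LPt, z ∈ C := by
    intro z hz
    rw [hCeq]
    exact List.mem_append_right _ (List.mem_append_right _ (List.mem_append_right _ hz))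
  have hLQsubC : ∀ z ∈ u :: LQt, z ∈ C := by
    intro z hz
    rcases em (z = u) with hzu | hzu
    · exact hLPsubC z (hzu ▸ List.mem_cons_self)
    · have : z ∈ seg3 := (hseg3iff z).mpr ⟨hz, hzu⟩
      rw [hCeq]
      exact List.mem_append_right _ (List.mem_append_right _ (List.mem_append_left _ this))
  have hXSsubC : ∀ z ∈ XS, z ∈ C := by
    intro z hz
    rw [hXSdef] at hz
    rcases List.mem_append.mp hz with h | h
    · rw [hCeq]; exact List.mem_append_left _ h
    · simp at h
      exact h ▸ hmC
  -- disjointness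
  have hwLSm : w ∈ LS → m' = w := hwLS
  have hdisj12 : List.Disjoint S₁ seg2 := by
    intro z hzS hz2
    have := hseg2sub z hz2
    rw [hXRdef] at this
    rcases List.mem_append.mp this with h | h
    · exact hR₁f z h (hS₁LS z hzS)
    · simp at h
      exact hS₁f z hzS h
  have hdisj13 : List.Disjoint S₁ seg3 := by
    intro z hzS hz3
    have hzw := hQW z ((hseg3iff z).mp hz3).1 (hSW z (hS₁LS z hzS))
    have hmw : m' = w := hwLSm (hzw ▸ hS₁LS z hzS)
    exact hS₁f z hzS (hzw.trans hmw.symm)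
  have hdisj14 : List.Disjoint S₁ (u :: LPt) := by
    intro z hzS hzP
    obtain ⟨hzu, hwu⟩ := hPW z hzP (hSW z (hS₁LS z hzS))
    have hzw : z = w := hzu.trans hwu.symm
    have hmw : m' = w := hwLSm (hzw ▸ hS₁LS z hzS)
    exact hS₁f z hzS (hzw.trans hmw.symm)
  have hdisj23 : List.Disjoint seg2 seg3 := by
    intro z hz2 hz3
    have hzw := hQW z ((hseg3iff z).mp hz3).1 (hXRW z (hseg2sub z hz2))
    exact hwseg2 (hzw ▸ hz2)
  have hdisj24 : List.Disjoint seg2 (u :: LPt) := by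
    intro z hz2 hzP
    obtain ⟨hzu, hwu⟩ := hPW z hzP (hXRW z (hseg2sub z hz2))
    exact hwseg2 ((hzu.trans hwu.symm) ▸ hz2)
  have hdisj34 : List.Disjoint seg3 (u :: LPt) := by
    intro z hz3 hzP
    exact ((hseg3iff z).mp hz3).2 (hPQ z hzP ((hseg3iff z).mp hz3).1)
  have hS₁nd : S₁.Nodup :=
    List.Nodup.sublist (List.sublist_append_left S₁ [m']) hXSnd
  have hseg2nd : seg2.Nodup :=
    List.Nodup.sublist (List.dropLast_sublist _) (List.nodup_reverse.mpr hXRnd)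
  have hseg3nd : seg3.Nodup :=
    List.Nodup.sublist (List.dropLast_sublist _) (List.nodup_reverse.mpr hQnd)
  have hCnd : C.Nodup := by
    rw [hCeq]
    rw [List.nodup_append', List.nodup_append', List.nodup_append']
    refine ⟨hS₁nd, ⟨hseg2nd, ⟨hseg3nd, hPnd, hdisj34⟩, ?_⟩, ?_⟩
    · intro z hz2 hz'
      rcases List.mem_append.mp hz' with h | h
      · exact hdisj23 hz2 h
      · exact hdisj24 hz2 h
    · intro z hzS hz'
      rcases List.mem_append.mp hz' with h | h
      · exact hdisj12 hzS h
      rcases List.mem_append.mp h with h' | h'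
      · exact hdisj13 hzS h'
      · exact hdisj14 hzS h'
  -- lifting chains to UStep on U
  have hCsub : ∀ z ∈ C, z ∈ U := fun z hz => hz
  have hlift : ∀ (L : List V) (r' : V → V → Prop), List.Chain' r' L → L.Nodup →
      (∀ z ∈ L, z ∈ U) → (∀ x' y', r' x' y' → A x' y' ∨ A y' x') →
      List.Chain' (UStep A U) L := by
    intro L r' hc hnd hsub harc
    exact S14.chain'_mono_mem (S14.chain'_ne_of_nodup hc hnd)
      (fun x' hx y' hy hr => ⟨hsub x' hx, hsub y' hy, hr.2, harc _ _ hr.1⟩)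
  have hcXRrev : List.Chain' (fun x' y' => StepIn A W y' x') XR.reverse := by
    rw [show @List.Chain' V = @List.IsChain V from rfl, List.isChain_reverse]
    exact hcXR
  have hcQrev : List.Chain' (fun x' y' => r y' x') (u :: LQt).reverse := by
    rw [show @List.Chain' V = @List.IsChain V from rfl, List.isChain_reverse]
    exact hcQ
  have hc1 : List.Chain' (UStep A U) XS :=
    hlift XS _ hcXS hXSnd (fun z hz => hXSsubC z hz) (fun _ _ h => Or.inl h.2.2)
  have hc2 : List.Chain' (UStep A U) XR.reverse :=
    hlift XR.reverse _ hcXRrev (List.nodup_reverse.mpr hXRnd)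
      (fun z hz => hXRsubC z (List.mem_reverse.mp hz)) (fun _ _ h => Or.inr h.2.2)
  have hc3 : List.Chain' (UStep A U) (u :: LQt).reverse :=
    hlift (u :: LQt).reverse _ hcQrev (List.nodup_reverse.mpr hQnd)
      (fun z hz => hLQsubC z (List.mem_reverse.mp hz)) (fun _ _ h => Or.inr h.2.2)
  have hc4 : List.Chain' (UStep A U) (u :: LPt) :=
    hlift (u :: LPt) _ hcP hPnd hLPsubC (fun _ _ h => Or.inl h.2.2)
  -- assemble the cycle chain via MyChain
  have hmy1 : S14.MyChain (UStep A U) i S₁ m' := ⟨hc1, hheadXS⟩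
  have hmy2 : S14.MyChain (UStep A U) m' seg2 w := by
    have heq2 : seg2 ++ [w] = XR.reverse := by
      rcases em (R₁ = []) with hr | hr
      · have hmw : m' = w := by
          rw [hr] at hReq
          rw [hReq] at hheadR
          simpa using hheadR
        rw [hseg2def, hXRdef, hr]
        simp [hmw]
      · exact S14.reverse_dropLast_append (hheadXR hr)
    constructor
    · rw [heq2]; exact hc2
    · rw [heq2, List.head?_reverse]; exact hlastXR
  have hmy3 : S14.MyChain (UStep A U) w seg3 u := by
    have heq3 : seg3 ++ [u] = (u :: LQt).reverse :=
      S14.reverse_dropLast_append hheadQ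
    constructor
    · rw [heq3]; exact hc3
    · rw [heq3, List.head?_reverse]; exact hlastQ
  have hmy4 : S14.MyChain (UStep A U) u LP' j := by
    constructor
    · rw [hLP'eq]; exact hc4
    · rw [hLP'eq]; exact hheadP
  have hmyC : S14.MyChain (UStep A U) i (S₁ ++ (seg2 ++ (seg3 ++ LP'))) j :=
    hmy1.append (hmy2.append (hmy3.append hmy4))
  have hchainC : List.Chain' (UStep A U) C := by
    rw [hCdef, hCldef]; exact hmyC.1
  have hheadC : C.head? = some i := by
    rw [hCdef, hCldef]; exact hmyC.2
  have hlastC : C.getLast? = some j := by rw [hCdef]; exact List.getLast?_concat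
  have hiC : i ∈ C := S14.mem_head? hheadC
  have hjC : j ∈ C := S14.mem_getLast? hlastC
  -- everyone in U reaches m'
  have hliftD : ∀ (L : List V) (T : Set V), List.Chain' (StepIn A T) L →
      (∀ z ∈ L, z ∈ U) → List.Chain' (StepIn A U) L := by
    intro L T hc hsub
    exact S14.chain'_mono_mem hc
      (fun x' hx y' hy hr => ⟨hsub x' hx, hsub y' hy, hr.2.2⟩)
  have hreach1 : ∀ v ∈ XS, Relation.ReflTransGen (StepIn A U) v m' :=
    S14.reflTransGen_last (hliftD XS W hcXS hXSsubC) hlastXS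
  have hreach2 : ∀ v ∈ XR, Relation.ReflTransGen (StepIn A U) v m' :=
    S14.reflTransGen_last (hliftD XR W hcXR hXRsubC) hlastXR
  have hwXR : w ∈ XR := by
    rcases em (R₁ = []) with hr | hr
    · have hmw : m' = w := by
        rw [hr] at hReq
        rw [hReq] at hheadR
        simpa using hheadR
      exact hmw ▸ hm'XR
    · rw [hXRdef]
      exact List.mem_append_left _ (S14.mem_head? (hwR₁head hr))
  have hreach3 : ∀ v ∈ u :: LQt, Relation.ReflTransGen (StepIn A U) v m' := by
    intro v hv
    have h1 : Relation.ReflTransGen (StepIn A U) v w :=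
      S14.reflTransGen_last (hliftD (u :: LQt) _ hcQ hLQsubC) hlastQ v hv
    exact h1.trans (hreach2 w hwXR)
  have hiXS : i ∈ XS := S14.mem_head? hheadXS
  have hreach4 : ∀ v ∈ u :: LPt, Relation.ReflTransGen (StepIn A U) v m' := by
    intro v hv
    have h1 : Relation.ReflTransGen (StepIn A U) v j :=
      S14.reflTransGen_last (hliftD (u :: LPt) _ hcP hLPsubC) hlastP v hv
    have h2 : StepIn A U j i := ⟨hjC, hiC, hji⟩
    exact (h1.tail h2).trans (hreach1 i hiXS)
  have hreachC : ∀ v ∈ C, Relation.ReflTransGen (StepIn A U) v m' := by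
    intro v hv
    rw [hCeq] at hv
    rcases List.mem_append.mp hv with h | h
    · exact hreach1 v (List.mem_append_left _ h)
    rcases List.mem_append.mp h with h' | h'
    · exact hreach2 v (hseg2sub v h')
    rcases List.mem_append.mp h' with h'' | h''
    · exact hreach3 v ((hseg3iff v).mp h'').1
    · exact hreach4 v h''
  -- cardinality
  have hlenseg3 : seg3.length = LQt.length := by
    rw [hseg3def]
    simp
  have hlen12 : 1 ≤ S₁.length + seg2.length := by
    by_contra hcon
    push_neg at hcon
    have hS1nil : S₁ = [] := by
      rcases S₁ with _ | _
      · rfl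
      · simp at hcon
    have hseg2nil : seg2 = [] := by
      rcases hs2 : seg2 with _ | _
      · rfl
      · rw [hs2] at hcon; simp at hcon
    have hr : R₁ = [] := by
      by_contra hr
      have h5 := S14.reverse_dropLast_append (hheadXR hr)
      rw [← hseg2def, hseg2nil] at h5
      have hlen5 := congrArg List.length h5
      rw [hXRdef] at hlen5
      simp at hlen5
      exact hr (by simpa [List.length_eq_zero_iff] using hlen5)
    have hmw : m' = w := by
      rw [hr] at hReq
      rw [hReq] at hheadR
      simpa using hheadR
    have hmi : m' = i := by
      rw [hS1nil] at hSeq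
      rw [hSeq] at hheadS
      simpa using hheadS
    exact hwi (hmw.symm.trans hmi)
  have hClen : p + q + 2 ≤ C.length := by
    have := congrArg List.length hCeq
    simp at this
    omega
  have hUncard : U.ncard = C.length := by
    have hUfin : U = ↑C.toFinset := by
      ext z
      simp [hUdef, List.mem_toFinset]
    rw [hUfin, Set.ncard_coe_finset, List.toFinset_card_of_nodup hCnd]
  have hcard : x + 3 ≤ U.ncard := by omega
  -- symmetry of UStep
  have hUsym : ∀ {T : Set V} (a' b' : V), UStep A T a' b' → UStep A T b' a' :=
    fun a' b' h => ⟨h.2.1, h.1, h.2.2.1.symm, h.2.2.2.symm⟩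
  -- connectivity of U
  have hUconn : UConnected A U := by
    refine ⟨⟨i, hiC⟩, fun a' ha' b' hb' => ?_⟩
    exact S14.chain'_connected (fun x' y' h => hUsym x' y' h) hchainC a' ha' b' hb'
  -- connectivity after deleting any vertex
  have hdel : ∀ v ∈ U, UConnected A (U \ {v}) := by
    intro v hv
    obtain ⟨C₁, C₂, hCv⟩ := List.append_of_mem (hv : v ∈ C)
    have hCndv := hCv ▸ hCnd
    rw [List.nodup_append'] at hCndv
    have hvC₂ : v ∉ C₂ := (List.nodup_cons.mp hCndv.2.1).1
    have hvC₁ : v ∉ C₁ := fun h => hCndv.2.2 h (List.mem_cons_self)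
    have hmemdel : ∀ z, z ∈ C₁ ++ C₂ → z ∈ U \ {v} := by
      intro z hz
      rcases List.mem_append.mp hz with h | h
      · refine ⟨?_, fun hzv => hvC₁ ((Set.mem_singleton_iff.mp hzv) ▸ h)⟩
        show z ∈ C
        rw [hCv]
        exact List.mem_append_left _ h
      · refine ⟨?_, fun hzv => hvC₂ ((Set.mem_singleton_iff.mp hzv) ▸ h)⟩
        show z ∈ C
        rw [hCv]
        exact List.mem_append_right _ (List.mem_cons_of_mem _ h)
    have hdelmem : ∀ z ∈ U \ {v}, z ∈ C₁ ++ C₂ := by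
      rintro z ⟨hzU, hzv⟩
      have hzC : z ∈ C := hzU
      rw [hCv] at hzC
      rcases List.mem_append.mp hzC with h | h
      · exact List.mem_append_left _ h
      rcases List.mem_cons.mp h with h' | h'
      · exact absurd (Set.mem_singleton_iff.mpr h') hzv
      · exact List.mem_append_right _ h'
    have hchainCv := hCv ▸ hchainC
    have hcC₁ : List.Chain' (UStep A U) C₁ := (List.isChain_append.mp hchainCv).1
    have hcC₂ : List.Chain' (UStep A U) C₂ :=
      ((List.isChain_append.mp hchainCv).2.1).tail
    have hconv : ∀ (L : List V), List.Chain' (UStep A U) L → (∀ z ∈ L, z ∈ C₁ ++ C₂) →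
        List.Chain' (UStep A (U \ {v})) L := by
      intro L hc hsub
      exact S14.chain'_mono_mem hc (fun x' hx y' hy hr =>
        ⟨hmemdel x' (hsub x' hx), hmemdel y' (hsub y' hy), hr.2.2.1, hr.2.2.2⟩)
    have hcC₁' : List.Chain' (UStep A (U \ {v})) C₁ :=
      hconv C₁ hcC₁ (fun z hz => List.mem_append_left _ hz)
    have hcC₂' : List.Chain' (UStep A (U \ {v})) C₂ :=
      hconv C₂ hcC₂ (fun z hz => List.mem_append_right _ hz)
    have hlenC : 3 ≤ C.length := by omega
    have hne : (C₁ ++ C₂) ≠ [] := by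
      intro h
      have h1 : C₁ = [] := by rcases List.append_eq_nil_iff.mp h with ⟨h1, _⟩; exact h1
      have h2 : C₂ = [] := by rcases List.append_eq_nil_iff.mp h with ⟨_, h2⟩; exact h2
      rw [h1, h2] at hCv
      simp at hCv
      rw [hCv] at hlenC
      simp at hlenC
    obtain ⟨z₀, hz₀⟩ := List.exists_mem_of_ne_nil _ hne
    refine ⟨⟨z₀, hmemdel z₀ hz₀⟩, ?_⟩
    have hbridge : ∀ a' ∈ C₁, ∀ b' ∈ C₂,
        Relation.ReflTransGen (UStep A (U \ {v})) a' b' := by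
      intro a' ha' b' hb'
      have hC₁ne : C₁ ≠ [] := List.ne_nil_of_mem ha'
      have hC₂ne : C₂ ≠ [] := List.ne_nil_of_mem hb'
      have hiC₁ : i ∈ C₁ := by
        have := hCv ▸ hheadC
        rw [List.head?_append_of_ne_nil _ hC₁ne] at this
        exact S14.mem_head? this
      have hjC₂ : j ∈ C₂ := by
        have h1 := hCv ▸ hlastC
        have h2 := S14.getLast?_suffix h1
        rcases C₂ with _ | ⟨c, t⟩
        · exact absurd rfl hC₂ne
        · have h3 : (c :: t).getLast? = some j := by
            rwa [List.getLast?_cons_cons] at h2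
          exact S14.mem_getLast? h3
      have hstep : UStep A (U \ {v}) j i := by
        refine ⟨hmemdel j (List.mem_append_right _ hjC₂),
          hmemdel i (List.mem_append_left _ hiC₁), fun h => hij h.symm, Or.inl hji⟩
      have h1 : Relation.ReflTransGen (UStep A (U \ {v})) a' i :=
        S14.chain'_connected (fun x' y' h => hUsym x' y' h) hcC₁' a' ha' i hiC₁
      have h2 : Relation.ReflTransGen (UStep A (U \ {v})) j b' :=
        S14.chain'_connected (fun x' y' h => hUsym x' y' h) hcC₂' j hjC₂ b' hb'
      exact ((h1.tail (hUsym _ _ hstep)).trans h2)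
    intro a' ha' b' hb'
    have ha'' := hdelmem a' ha'
    have hb'' := hdelmem b' hb'
    rcases List.mem_append.mp ha'' with ha1 | ha2 <;>
      rcases List.mem_append.mp hb'' with hb1 | hb2
    · exact S14.chain'_connected (fun x' y' h => hUsym x' y' h) hcC₁' a' ha1 b' hb1
    · exact hbridge a' ha1 b' hb2
    · haveI : Std.Symm (UStep A (U \ {v})) := ⟨fun x' y' h => hUsym x' y' h⟩
      exact Std.Symm.symm _ _ (hbridge b' hb1 a' ha2)
    · exact S14.chain'_connected (fun x' y' h => hUsym x' y' h) hcC₂' a' ha2 b' hb2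
  refine ⟨U, hiC, hjC, ⟨w, hwC, hwWi⟩, hcard, ?_⟩
  refine ⟨⟨m', hmC, fun b hb => ⟨hb, hreachC b hb⟩⟩, ?_, hUconn, hdel⟩
  omega
end
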